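/- arXiv:2205.07676 — 4 statements merged into one kernel-verified Lean document; each statement's English description precedes it below -/
import Mathlib

section
/- Let L be continuous and uniformly superlinear and w continuous with w(x) ≥ -α|x| + β. Then for each K ∈ ℕ the discrete action L_w^K : (ℝ^d)^K → ℝ attains its infimum: there exists ȳ ∈ (ℝ^d)^K with L_w^K(ȳ) = inf_{y ∈ (ℝ^d)^K} L_w^K(y). -/
/-- The discrete action `L_w^K` attains its infimum over all discrete curves
with endpoint `y K = x`, when `L` is continuous and uniformly superlinear and
`w` is continuous with `w x ≥ -α‖x‖ + β`. -/
theorem discrete_action_attains_min (d : ℕ) (t : ℝ) (ht : 0 < t)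
    (L : EuclideanSpace ℝ (Fin d) → ℝ → EuclideanSpace ℝ (Fin d) → ℝ)
    (hLcont : Continuous fun q : EuclideanSpace ℝ (Fin d) × ℝ × EuclideanSpace ℝ (Fin d) =>
      L q.1 q.2.1 q.2.2)
    (hsuper : ∀ a : ℝ, 0 ≤ a → ∃ c : ℝ, ∀ x s ξ, L x s ξ ≥ a * ‖ξ‖ + c)
    (w : EuclideanSpace ℝ (Fin d) → ℝ) (hwcont : Continuous w)
    (α β : ℝ) (hα : 0 ≤ α)
    (hw : ∀ x, w x ≥ -α * ‖x‖ + β)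
    (K : ℕ) (hK : 0 < K) (x : EuclideanSpace ℝ (Fin d)) :
    ∃ ybar : ℕ → EuclideanSpace ℝ (Fin d), ybar K = x ∧
      ∀ y : ℕ → EuclideanSpace ℝ (Fin d), y K = x →
        (∑ k ∈ Finset.range K,
            L (ybar k) ((t / K) * k) ((t / K)⁻¹ • (ybar (k + 1) - ybar k)) * (t / K))
          + w (ybar 0)
        ≤ (∑ k ∈ Finset.range K,
            L (y k) ((t / K) * k) ((t / K)⁻¹ • (y (k + 1) - y k)) * (t / K))
          + w (y 0) := by
  classical
  set h := t / (K : ℝ) with hhdef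
  have hK' : (0 : ℝ) < K := by exact_mod_cast hK
  have hh : 0 < h := div_pos ht hK'
  obtain ⟨c, hc⟩ := hsuper (α + 1) (by linarith)
  set ex : (Fin K → EuclideanSpace ℝ (Fin d)) → ℕ → EuclideanSpace ℝ (Fin d) :=
    fun v k => if hk : k < K then v ⟨k, hk⟩ else x with hexdef
  have exK : ∀ v, ex v K = x := fun v => dif_neg (lt_irrefl K)
  set F : (Fin K → EuclideanSpace ℝ (Fin d)) → ℝ := fun v =>
    (∑ k ∈ Finset.range K, L (ex v k) (h * k) (h⁻¹ • (ex v (k + 1) - ex v k)) * h)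
      + w (ex v 0) with hFdef
  -- continuity of coordinates of the extension
  have hexc : ∀ k, Continuous fun v : Fin K → EuclideanSpace ℝ (Fin d) => ex v k := by
    intro k
    by_cases hk : k < K
    · simpa [hexdef, dif_pos hk] using continuous_apply (⟨k, hk⟩ : Fin K)
    · simpa [hexdef, dif_neg hk] using
        (continuous_const : Continuous fun _ : Fin K → EuclideanSpace ℝ (Fin d) => x)
  have hFc : Continuous F := by
    rw [hFdef]
    apply Continuous.add
    · apply continuous_finset_sum
      intro k _
      apply Continuous.mul _ continuous_const
      exact hLcont.comp ((hexc k).prodMk (continuous_const.prodMk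
        (((hexc (k + 1)).sub (hexc k)).const_smul h⁻¹)))
    · exact hwcont.comp (hexc 0)
  -- the action of a curve with endpoint x equals F of its restriction
  have hA : ∀ y : ℕ → EuclideanSpace ℝ (Fin d), y K = x →
      F (fun i : Fin K => y i) =
        (∑ k ∈ Finset.range K, L (y k) (h * k) (h⁻¹ • (y (k + 1) - y k)) * h) + w (y 0) := by
    intro y hy
    have hxk : ∀ k, k ≤ K → ex (fun i : Fin K => y i) k = y k := by
      intro k hk
      rcases lt_or_eq_of_le hk with hk' | hk'
      · simp [hexdef, dif_pos hk']
      · subst hk'; simp [hexdef, hy]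
    simp only [hFdef]
    congr 1
    · apply Finset.sum_congr rfl
      intro k hk
      rw [Finset.mem_range] at hk
      rw [hxk k hk.le, hxk (k + 1) hk]
    · rw [hxk 0 (Nat.zero_le K)]
  -- coercive lower bound
  have lb : ∀ v, ‖v‖ + ((K : ℝ) * (c * h) - (α + 1) * ‖x‖ + β) ≤ F v := by
    intro v
    set y := ex v with hy
    have hyK : y K = x := exK v
    set S := ∑ k ∈ Finset.range K, ‖y (k + 1) - y k‖ with hSdef
    have hS0 : 0 ≤ S := Finset.sum_nonneg fun _ _ => norm_nonneg _
    have htel : ∀ j, j ≤ K → ‖y j‖ ≤ ‖x‖ + S := by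
      intro j hj
      have h1 : ∑ i ∈ Finset.Ico j K, (y (i + 1) - y i) = y K - y j := by
        rw [Finset.sum_Ico_eq_sum_range]
        have htl := Finset.sum_range_sub (fun i => y (j + i)) (K - j)
        simpa [Nat.add_sub_cancel' hj, add_assoc] using htl
      have h2 : ‖y K - y j‖ ≤ S := by
        rw [← h1]
        calc ‖∑ i ∈ Finset.Ico j K, (y (i + 1) - y i)‖
            ≤ ∑ i ∈ Finset.Ico j K, ‖y (i + 1) - y i‖ := norm_sum_le _ _
          _ ≤ S := Finset.sum_le_sum_of_subset_of_nonneg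
              (by intro i hi; rw [Finset.mem_range]; exact (Finset.mem_Ico.1 hi).2)
              (fun _ _ _ => norm_nonneg _)
      have h3 : ‖y j‖ ≤ ‖y K‖ + ‖y K - y j‖ :=
        calc ‖y j‖ = ‖y K - (y K - y j)‖ := by rw [sub_sub_cancel]
          _ ≤ ‖y K‖ + ‖y K - y j‖ := norm_sub_le _ _
      rw [hyK] at h2 h3
      linarith
    have hterm : ∀ k ∈ Finset.range K,
        (α + 1) * ‖y (k + 1) - y k‖ + c * h
          ≤ L (y k) (h * k) (h⁻¹ • (y (k + 1) - y k)) * h := by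
      intro k _
      have hL := hc (y k) (h * k) (h⁻¹ • (y (k + 1) - y k))
      have hnorm : ‖h⁻¹ • (y (k + 1) - y k)‖ = h⁻¹ * ‖y (k + 1) - y k‖ := by
        rw [norm_smul, Real.norm_eq_abs, abs_of_pos (inv_pos.2 hh)]
      have h1 : ((α + 1) * (h⁻¹ * ‖y (k + 1) - y k‖) + c) * h
          = (α + 1) * ‖y (k + 1) - y k‖ + c * h := by
        field_simp
      calc (α + 1) * ‖y (k + 1) - y k‖ + c * h
          = ((α + 1) * (h⁻¹ * ‖y (k + 1) - y k‖) + c) * h := h1.symm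
        _ ≤ L (y k) (h * k) (h⁻¹ • (y (k + 1) - y k)) * h := by
            apply mul_le_mul_of_nonneg_right _ hh.le
            rw [← hnorm]; exact hL
    have hsum : (α + 1) * S + (K : ℝ) * (c * h)
        ≤ ∑ k ∈ Finset.range K, L (y k) (h * k) (h⁻¹ • (y (k + 1) - y k)) * h := by
      have hs := Finset.sum_le_sum hterm
      have he : ∑ k ∈ Finset.range K, ((α + 1) * ‖y (k + 1) - y k‖ + c * h)
          = (α + 1) * S + (K : ℝ) * (c * h) := by
        rw [Finset.sum_add_distrib, ← Finset.mul_sum, Finset.sum_const,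
          Finset.card_range, nsmul_eq_mul]
      linarith [hs, he.ge, he.le]
    have hw0 : -α * (‖x‖ + S) + β ≤ w (y 0) := by
      have h1 := hw (y 0)
      have h0 := htel 0 (Nat.zero_le K)
      nlinarith
    have hv : ‖v‖ ≤ ‖x‖ + S := by
      rw [pi_norm_le_iff_of_nonneg (by positivity)]
      intro i
      have hi := htel i i.2.le
      have hyi : y (i : ℕ) = v i := by simp [hy, hexdef, i.2]
      rwa [hyi] at hi
    have hFv : F v = (∑ k ∈ Finset.range K, L (y k) (h * k) (h⁻¹ • (y (k + 1) - y k)) * h)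
        + w (y 0) := by rw [hFdef]
    rw [hFv]
    nlinarith
  have hco : Filter.Tendsto F (Filter.cocompact _) Filter.atTop := by
    apply Filter.tendsto_atTop_mono lb
    exact Filter.tendsto_atTop_add_const_right _ _ tendsto_norm_cocompact_atTop
  obtain ⟨v, hv⟩ := hFc.exists_forall_le hco
  refine ⟨ex v, exK v, ?_⟩
  intro y hy
  have h1 : F v = (∑ k ∈ Finset.range K,
      L (ex v k) (h * k) (h⁻¹ • (ex v (k + 1) - ex v k)) * h) + w (ex v 0) := by rw [hFdef]
  have h2 := hv (fun i : Fin K => y i)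
  have h3 := hA y hy
  rw [← h3, ← h1]
  exact h2
end

section
/- Transfer of minimality from piecewise-C¹ to Lipschitz: let L be continuous, w continuous, and suppose γ* is a C² curve with γ*(t) = x that minimizes L_w over all continuous piecewise-C¹ curves γ : [0,t] → ℝ^d with γ(t) = x. Then γ* minimizes L_w over all Lipschitz curves γ : [0,t] → ℝ^d with γ(t) = x, i.e., L_w(γ*) ≤ L_w(γ) for every such Lipschitz γ. -/
open MeasureTheory intervalIntegral Set

section PL
variable {E : Type*} [NormedAddCommGroup E] [NormedSpace ℝ E]

noncomputable def plin (γ : ℝ → E) (h s : ℝ) : E :=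
  γ (h * ⌊s / h⌋) + ((s - h * ⌊s / h⌋) / h) • (γ (h * ⌊s / h⌋ + h) - γ (h * ⌊s / h⌋))

variable {γ : ℝ → E} {h : ℝ} {M : NNReal}

lemma plin_floor_eq (hh : 0 < h) (k : ℤ) {u : ℝ} (h1 : h * k ≤ u) (h2 : u < h * (k + 1)) :
    ⌊u / h⌋ = k := by
  rw [Int.floor_eq_iff]
  constructor
  · rw [le_div_iff₀ hh] at *; linarith [h1]
  · rw [div_lt_iff₀ hh]; push_cast; linarith

lemma plin_node (hh : 0 < h) (k : ℤ) : plin γ h (h * k) = γ (h * k) := by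
  have hf : ⌊(h * k) / h⌋ = k := by
    rw [mul_comm, mul_div_assoc, div_self hh.ne', mul_one, Int.floor_intCast]
  simp [plin, hf]

lemma plin_piece (hh : 0 < h) (k : ℤ) {u : ℝ} (hu : u ∈ Icc (h * k) (h * (k + 1))) :
    plin γ h u = γ (h * k) + ((u - h * k) / h) • (γ (h * k + h) - γ (h * k)) := by
  rcases lt_or_eq_of_le hu.2 with h2 | h2
  · have hf : ⌊u / h⌋ = k := plin_floor_eq hh k hu.1 h2
    simp [plin, hf]
  · have hk1 : h * ((k : ℤ) + 1 : ℤ) = u := by push_cast; linarith [h2]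
    rw [← hk1, plin_node hh (k + 1)]
    have : ((h * ((k : ℤ) + 1 : ℤ) : ℝ) - h * k) / h = 1 := by
      push_cast; field_simp; ring
    rw [this, one_smul]; push_cast; rw [mul_add, mul_one]; abel

lemma plin_mem_floor (hh : 0 < h) (s : ℝ) :
    s ∈ Icc (h * ⌊s / h⌋) (h * (⌊s / h⌋ + 1)) := by
  constructor
  · rw [mul_comm, ← le_div_iff₀ hh]; exact Int.floor_le _
  · rw [mul_comm, ← div_le_iff₀ hh]; push_cast
    exact (Int.lt_floor_add_one _).le

lemma plin_piece_dist (hh : 0 < h) (hγ : LipschitzWith M γ) (k : ℤ) {s u : ℝ}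
    (hs : s ∈ Icc (h * k) (h * (k + 1))) (hu : u ∈ Icc (h * k) (h * (k + 1)))
    (hsu : s ≤ u) : ‖plin γ h u - plin γ h s‖ ≤ M * (u - s) := by
  rw [plin_piece hh k hu, plin_piece hh k hs]
  have : (γ (h * k) + ((u - h * k) / h) • (γ (h * k + h) - γ (h * k)))
      - (γ (h * k) + ((s - h * k) / h) • (γ (h * k + h) - γ (h * k)))
      = ((u - s) / h) • (γ (h * k + h) - γ (h * k)) := by
    rw [add_sub_add_left_eq_sub, ← sub_smul]; congr 1; field_simp; ring
  rw [this, norm_smul, Real.norm_eq_abs,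
    abs_of_nonneg (div_nonneg (sub_nonneg.2 hsu) hh.le)]
  have hΔ : ‖γ (h * k + h) - γ (h * k)‖ ≤ M * h := by
    have := hγ.dist_le_mul (h * k + h) (h * k)
    rwa [dist_eq_norm, Real.dist_eq, add_sub_cancel_left, abs_of_pos hh] at this
  calc (u - s) / h * ‖γ (h * k + h) - γ (h * k)‖ ≤ (u - s) / h * (M * h) := by
        apply mul_le_mul_of_nonneg_left hΔ (div_nonneg (sub_nonneg.2 hsu) hh.le)
    _ = M * (u - s) := by field_simp

lemma plin_lipschitz (hh : 0 < h) (hγ : LipschitzWith M γ) :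
    LipschitzWith M (plin γ h) := by
  have key : ∀ N : ℕ, ∀ s u : ℝ, s ≤ u → ⌊u / h⌋ ≤ ⌊s / h⌋ + N →
      ‖plin γ h u - plin γ h s‖ ≤ M * (u - s) := by
    intro N
    induction N with
    | zero =>
      intro s u hsu hN
      have hk : ⌊u / h⌋ = ⌊s / h⌋ := le_antisymm (by simpa using hN)
        (Int.floor_le_floor (by gcongr))
      have hs' := plin_mem_floor hh s
      have hu' := plin_mem_floor hh u
      rw [hk] at hu'
      exact plin_piece_dist hh hγ _ hs' hu' hsu
    | succ N ih =>
      intro s u hsu hN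
      by_cases hcase : ⌊u / h⌋ ≤ ⌊s / h⌋ + N
      · exact ih s u hsu hcase
      push_neg at hcase
      set k := ⌊s / h⌋ with hk
      have hklt : k < ⌊u / h⌋ := by omega
      set c := h * ((k : ℝ) + 1) with hc
      have hsc : s ≤ c := (plin_mem_floor hh s).2
      have hcu : c ≤ u := by
        have : ((k : ℝ) + 1) ≤ u / h := by
          have : ((k + 1 : ℤ) : ℝ) ≤ (⌊u / h⌋ : ℝ) := by exact_mod_cast hklt
          push_cast at this
          linarith [Int.floor_le (u / h)]
        rw [hc, mul_comm, ← le_div_iff₀ hh]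
        push_cast; linarith
      have hfc : ⌊c / h⌋ = k + 1 := by
        have : c / h = ((k + 1 : ℤ) : ℝ) := by rw [hc]; push_cast; field_simp
        rw [this, Int.floor_intCast]
      have h1 : ‖plin γ h u - plin γ h c‖ ≤ M * (u - c) := by
        apply ih c u hcu; omega
      have h2 : ‖plin γ h c - plin γ h s‖ ≤ M * (c - s) := by
        have hcmem : c ∈ Icc (h * (k : ℝ)) (h * ((k : ℝ) + 1)) := by
          refine ⟨?_, le_refl _⟩
          rw [hc]; nlinarith [hh]
        exact plin_piece_dist hh hγ k (plin_mem_floor hh s) hcmem hsc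
      calc ‖plin γ h u - plin γ h s‖
          ≤ ‖plin γ h u - plin γ h c‖ + ‖plin γ h c - plin γ h s‖ := norm_sub_le_norm_sub_add_norm_sub _ _ _
        _ ≤ M * (u - c) + M * (c - s) := add_le_add h1 h2
        _ = M * (u - s) := by ring
  apply LipschitzWith.of_dist_le_mul
  intro a b
  rcases le_total a b with hab | hab
  · rw [dist_eq_norm, norm_sub_rev, Real.dist_eq, abs_of_nonpos (by linarith), neg_sub]
    exact key (⌊b / h⌋ - ⌊a / h⌋).toNat a b hab (by omega)
  · rw [dist_eq_norm, Real.dist_eq, abs_of_nonneg (by linarith)]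
    exact key (⌊a / h⌋ - ⌊b / h⌋).toNat b a hab (by omega)

lemma plin_hasDerivAt_affine (hh : 0 < h) (k : ℤ) (s : ℝ) :
    HasDerivAt (fun u => γ (h * k) + ((u - h * k) / h) • (γ (h * k + h) - γ (h * k)))
      (h⁻¹ • (γ (h * k + h) - γ (h * k))) s := by
  have h1 : HasDerivAt (fun u : ℝ => (u - h * k) / h) h⁻¹ s := by
    simpa [one_div] using ((hasDerivAt_id s).sub_const (h * k)).div_const h
  exact (h1.smul_const _).const_add _

lemma plin_deriv (hh : 0 < h) (k : ℤ) {s : ℝ} (h1 : h * k < s) (h2 : s < h * (k + 1)) :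
    deriv (plin γ h) s = h⁻¹ • (γ (h * k + h) - γ (h * k)) := by
  have heq : plin γ h =ᶠ[nhds s]
      fun u => γ (h * k) + ((u - h * k) / h) • (γ (h * k + h) - γ (h * k)) := by
    filter_upwards [isOpen_Ioo.mem_nhds (⟨h1, h2⟩ : s ∈ Ioo (h * k) (h * (k + 1)))] with u hu
    exact plin_piece hh k ⟨hu.1.le, hu.2.le⟩
  rw [heq.deriv_eq, (plin_hasDerivAt_affine hh k s).deriv]

lemma plin_contDiffOn (hh : 0 < h) (k : ℤ) :
    ContDiffOn ℝ 1 (plin γ h) (Icc (h * k) (h * (k + 1))) := by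
  have : ContDiff ℝ 1 (fun u => γ (h * k) + ((u - h * k) / h) • (γ (h * k + h) - γ (h * k))) :=
    contDiff_const.add (((contDiff_id.sub contDiff_const).div_const h).smul contDiff_const)
  exact this.contDiffOn.congr (fun u hu => plin_piece hh k hu)

lemma slope_tendsto {γ : ℝ → E} {s : ℝ} (hd : DifferentiableAt ℝ γ s) {h : ℕ → ℝ}
    (hh : ∀ n, 0 < h n) (hh0 : Filter.Tendsto h Filter.atTop (nhds 0)) {a : ℕ → ℝ}
    (ha : ∀ n, a n ≤ s) (hb : ∀ n, s ≤ a n + h n) :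
    Filter.Tendsto (fun n => (h n)⁻¹ • (γ (a n + h n) - γ (a n))) Filter.atTop
      (nhds (deriv γ s)) := by
  rw [Metric.tendsto_atTop]
  intro ε hε
  set dv := deriv γ s with hdv
  have hlo := hasDerivAt_iff_isLittleO.mp hd.hasDerivAt
  have hsm := hlo.def (show (0:ℝ) < ε/4 by linarith)
  rw [Metric.eventually_nhds_iff] at hsm
  obtain ⟨δ, hδ, hsmall⟩ := hsm
  obtain ⟨N, hN⟩ := Metric.tendsto_atTop.mp hh0 δ hδ
  refine ⟨N, fun n hn => ?_⟩
  have hhn : h n < δ := by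
    have := hN n hn; rw [Real.dist_eq, sub_zero, abs_of_pos (hh n)] at this; exact this
  set b := a n + h n with hbdef
  have hda : dist (a n) s < δ := by
    rw [Real.dist_eq, abs_of_nonpos (by linarith [ha n])]
    have := hb n; linarith
  have hdb : dist b s < δ := by
    rw [Real.dist_eq, abs_of_nonneg (by linarith [hb n])]
    have := ha n; rw [hbdef]; linarith
  have e1 := hsmall hdb
  have e2 := hsmall hda
  have hXa : ‖γ b - γ s - (b - s) • dv‖ ≤ ε/4 * h n := by
    refine e1.trans ?_
    have : ‖b - s‖ ≤ h n := by
      rw [Real.norm_eq_abs, abs_of_nonneg (by linarith [hb n])]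
      have := ha n; rw [hbdef]; linarith
    nlinarith
  have hXb : ‖γ (a n) - γ s - (a n - s) • dv‖ ≤ ε/4 * h n := by
    refine e2.trans ?_
    have : ‖a n - s‖ ≤ h n := by
      rw [Real.norm_eq_abs, abs_of_nonpos (by linarith [ha n])]
      have := hb n; linarith
    nlinarith
  have hne : h n ≠ 0 := (hh n).ne'
  have hkey : (h n)⁻¹ • (γ b - γ (a n)) - dv
      = (h n)⁻¹ • ((γ b - γ s - (b - s) • dv) - (γ (a n) - γ s - (a n - s) • dv)) := by
    rw [hbdef]
    match_scalars
    all_goals field_simp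
    all_goals ring
  rw [dist_eq_norm, hkey, norm_smul, Real.norm_eq_abs, abs_of_pos (inv_pos.2 (hh n))]
  have : ‖(γ b - γ s - (b - s) • dv) - (γ (a n) - γ s - (a n - s) • dv)‖ ≤ ε/2 * h n := by
    calc _ ≤ ‖γ b - γ s - (b - s) • dv‖ + ‖γ (a n) - γ s - (a n - s) • dv‖ := norm_sub_le _ _
      _ ≤ ε/4 * h n + ε/4 * h n := add_le_add hXa hXb
      _ = ε/2 * h n := by ring
  calc (h n)⁻¹ * ‖(γ b - γ s - (b - s) • dv) - (γ (a n) - γ s - (a n - s) • dv)‖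
      ≤ (h n)⁻¹ * (ε/2 * h n) := mul_le_mul_of_nonneg_left this (inv_pos.2 (hh n)).le
    _ = ε/2 := by field_simp
    _ < ε := by linarith


end PL


/-- `γ : ℝ → ℝ^d` is continuous and piecewise `C¹` on `[0,t]`: there is a
finite partition `0 = τ_0 < τ_1 < ⋯ < τ_m = t` such that `γ` is `C¹` on each
subinterval `[τ_{l-1}, τ_l]`. -/
def IsPiecewiseC1 (d : ℕ) (t : ℝ) (γ : ℝ → EuclideanSpace ℝ (Fin d)) : Prop :=
  Continuous γ ∧ ∃ (m : ℕ) (τ : ℕ → ℝ), 0 < m ∧ τ 0 = 0 ∧ τ m = t ∧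
    (∀ l < m, τ l < τ (l + 1)) ∧
    ∀ l < m, ContDiffOn ℝ 1 γ (Set.Icc (τ l) (τ (l + 1)))

/-- Transfer of minimality from the piecewise-`C¹` class to the Lipschitz
class: if the `C²` curve `γ*` with `γ* t = x` minimizes the action
`L_w(γ) = ∫₀ᵗ L(γ,s,γ') ds + w(γ 0)` over all continuous piecewise-`C¹`
curves with endpoint `x`, then it also minimizes over all Lipschitz curves
with endpoint `x`. -/
theorem minimality_transfer_to_Lipschitz (d : ℕ) (t : ℝ) (ht : 0 < t)
    (L : EuclideanSpace ℝ (Fin d) → ℝ → EuclideanSpace ℝ (Fin d) → ℝ)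
    (hLcont : Continuous fun q : EuclideanSpace ℝ (Fin d) × ℝ × EuclideanSpace ℝ (Fin d) =>
      L q.1 q.2.1 q.2.2)
    (w : EuclideanSpace ℝ (Fin d) → ℝ) (hwcont : Continuous w)
    (x : EuclideanSpace ℝ (Fin d))
    (γstar : ℝ → EuclideanSpace ℝ (Fin d)) (hγstar : ContDiff ℝ 2 γstar)
    (hγstart : γstar t = x)
    (hmin : ∀ γ : ℝ → EuclideanSpace ℝ (Fin d), IsPiecewiseC1 d t γ → γ t = x →
      (∫ s in (0 : ℝ)..t, L (γstar s) s (deriv γstar s)) + w (γstar 0)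
        ≤ (∫ s in (0 : ℝ)..t, L (γ s) s (deriv γ s)) + w (γ 0)) :
    ∀ γ : ℝ → EuclideanSpace ℝ (Fin d), (∃ M : NNReal, LipschitzWith M γ) → γ t = x →
      (∫ s in (0 : ℝ)..t, L (γstar s) s (deriv γstar s)) + w (γstar 0)
        ≤ (∫ s in (0 : ℝ)..t, L (γ s) s (deriv γ s)) + w (γ 0) := by
  rintro γ ⟨M, hγM⟩ hγt
  set A := (∫ s in (0 : ℝ)..t, L (γstar s) s (deriv γstar s)) + w (γstar 0) with hA
  set h : ℕ → ℝ := fun n => t / (n + 1) with hhdef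
  have hh : ∀ n, 0 < h n := fun n => div_pos ht (by positivity)
  set P : ℕ → ℝ → EuclideanSpace ℝ (Fin d) := fun n => plin γ (h n) with hPdef
  -- node values
  have hP0 : ∀ n, P n 0 = γ 0 := by
    intro n
    have := plin_node (γ := γ) (hh n) 0
    simpa using this
  have hnode : ∀ n (k : ℤ), P n (h n * k) = γ (h n * k) := fun n k => plin_node (hh n) k
  have hPt : ∀ n, P n t = x := by
    intro n
    have hnt : h n * (((n : ℤ) + 1 : ℤ) : ℝ) = t := by
      push_cast; rw [hhdef]; field_simp
    have := hnode n ((n : ℤ) + 1)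
    rw [hnt] at this
    rw [this, hγt]
  have hPlip : ∀ n, LipschitzWith M (P n) := fun n => plin_lipschitz (hh n) hγM
  -- piecewise C¹
  have hpw : ∀ n, IsPiecewiseC1 d t (P n) := by
    intro n
    refine ⟨(hPlip n).continuous, n + 1, fun l => (l : ℝ) * h n, Nat.succ_pos n, by simp, ?_, ?_, ?_⟩
    · push_cast; rw [hhdef]; field_simp
    · intro l _
      have := hh n
      push_cast
      nlinarith
    · intro l _
      have hco := plin_contDiffOn (γ := γ) (hh n) (l : ℤ)
      have hset : Set.Icc (((l : ℕ) : ℝ) * h n) (((l + 1 : ℕ) : ℝ) * h n)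
          = Set.Icc (h n * ((l : ℤ) : ℝ)) (h n * (((l : ℤ) : ℝ) + 1)) := by
        congr 1 <;> push_cast <;> ring
      rw [hset]
      exact hco
  have hineq : ∀ n, A ≤ (∫ s in (0 : ℝ)..t, L (P n s) s (deriv (P n) s)) + w (γ 0) := by
    intro n
    have := hmin (P n) (hpw n) (hPt n)
    rwa [hP0 n] at this
  -- measure and integrand
  set μ : Measure ℝ := volume.restrict (Set.Ioc 0 t) with hμ
  set F : ℕ → ℝ → ℝ := fun n s => L (P n s) s (deriv (P n) s) with hF
  set f : ℝ → ℝ := fun s => L (γ s) s (deriv γ s) with hf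
  -- measurability
  have hFmeas : ∀ n, AEStronglyMeasurable (F n) μ := by
    intro n
    have hm : Measurable fun s : ℝ => ((P n s, (s, deriv (P n) s)) :
        EuclideanSpace ℝ (Fin d) × ℝ × EuclideanSpace ℝ (Fin d)) :=
      ((hPlip n).continuous.measurable).prodMk (measurable_id.prodMk (measurable_deriv _))
    exact (hLcont.measurable.comp hm).aestronglyMeasurable
  -- uniform bound from compactness
  obtain ⟨C, hC⟩ := ((isCompact_closedBall (γ 0) (M * t)).prod
    ((isCompact_Icc (a := (0:ℝ)) (b := t)).prod (isCompact_closedBall (0 : EuclideanSpace ℝ (Fin d)) M))).exists_bound_of_continuousOn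
    hLcont.continuousOn
  -- null set of nodes
  set Z : Set ℝ := ⋃ n : ℕ, Set.range fun k : ℤ => h n * (k : ℝ) with hZdef
  have hZ : volume Z = 0 :=
    measure_iUnion_null fun n => (Set.countable_range _).measure_zero _
  have hZae : ∀ᵐ s : ℝ, s ∉ Z := measure_eq_zero_iff_ae_notMem.mp hZ
  -- derivative formula off the nodes
  have hderiv_eq : ∀ s : ℝ, s ∉ Z → ∀ n,
      deriv (P n) s = (h n)⁻¹ • (γ (h n * ⌊s / h n⌋ + h n) - γ (h n * ⌊s / h n⌋)) := by
    intro s hsZ n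
    have hmem := plin_mem_floor (hh n) s
    have hne1 : h n * (⌊s / h n⌋ : ℝ) ≠ s := fun e =>
      hsZ (Set.mem_iUnion.2 ⟨n, ⟨⌊s / h n⌋, e⟩⟩)
    have hne2 : s ≠ h n * ((⌊s / h n⌋ : ℝ) + 1) := by
      intro e
      refine hsZ (Set.mem_iUnion.2 ⟨n, ⟨⌊s / h n⌋ + 1, ?_⟩⟩)
      push_cast
      linarith [e]
    exact plin_deriv (hh n) _ (lt_of_le_of_ne hmem.1 hne1) (lt_of_le_of_ne hmem.2 hne2)
  -- derivative bound off the nodes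
  have hdnorm : ∀ s : ℝ, s ∉ Z → ∀ n, ‖deriv (P n) s‖ ≤ M := by
    intro s hsZ n
    rw [hderiv_eq s hsZ n, norm_smul, Real.norm_eq_abs, abs_of_pos (inv_pos.2 (hh n))]
    have hΔ : ‖γ (h n * ⌊s / h n⌋ + h n) - γ (h n * ⌊s / h n⌋)‖ ≤ M * h n := by
      have := hγM.dist_le_mul (h n * ⌊s / h n⌋ + h n) (h n * ⌊s / h n⌋)
      rwa [dist_eq_norm, Real.dist_eq, add_sub_cancel_left, abs_of_pos (hh n)] at this
    calc (h n)⁻¹ * ‖γ (h n * ⌊s / h n⌋ + h n) - γ (h n * ⌊s / h n⌋)‖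
        ≤ (h n)⁻¹ * (M * h n) := mul_le_mul_of_nonneg_left hΔ (inv_pos.2 (hh n)).le
      _ = M := by rw [mul_comm (M : ℝ), inv_mul_cancel_left₀ (hh n).ne']
  -- a.e. bound
  have h_bound : ∀ n, ∀ᵐ s ∂μ, ‖F n s‖ ≤ C := by
    intro n
    rw [hμ]
    filter_upwards [ae_restrict_mem measurableSet_Ioc, ae_restrict_of_ae hZae] with s hs hsZ
    have h1 : P n s ∈ Metric.closedBall (γ 0) (M * t) := by
      rw [Metric.mem_closedBall, ← hP0 n]
      calc dist (P n s) (P n 0) ≤ M * dist s 0 := (hPlip n).dist_le_mul s 0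
        _ ≤ M * t := by
            rw [Real.dist_eq, sub_zero, abs_of_pos hs.1]
            exact mul_le_mul_of_nonneg_left hs.2 M.2
    have h2 : s ∈ Set.Icc (0 : ℝ) t := ⟨hs.1.le, hs.2⟩
    have h3 : deriv (P n) s ∈ Metric.closedBall (0 : EuclideanSpace ℝ (Fin d)) M := by
      rw [Metric.mem_closedBall, dist_zero_right]
      exact hdnorm s hsZ n
    exact hC (P n s, s, deriv (P n) s) ⟨h1, h2, h3⟩
  have hbound_int : Integrable (fun _ : ℝ => C) μ := by
    rw [hμ]
    exact integrableOn_const measure_Ioc_lt_top.ne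
  -- mesh tends to zero
  have hh0 : Filter.Tendsto h Filter.atTop (nhds 0) := by
    have := tendsto_one_div_add_atTop_nhds_zero_nat.const_mul t
    rw [mul_zero] at this
    refine this.congr fun n => ?_
    rw [hhdef]
    field_simp
  -- a.e. convergence of integrands
  have h_lim : ∀ᵐ s ∂μ, Filter.Tendsto (fun n => F n s) Filter.atTop (nhds (f s)) := by
    have hdiff : ∀ᵐ s : ℝ, DifferentiableAt ℝ γ s := hγM.ae_differentiableAt
    rw [hμ]
    filter_upwards [ae_restrict_of_ae hZae, ae_restrict_of_ae hdiff] with s hsZ hsd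
    set a : ℕ → ℝ := fun n => h n * ⌊s / h n⌋ with hadef
    have h_a_le : ∀ n, a n ≤ s := fun n => (plin_mem_floor (hh n) s).1
    have h_le_b : ∀ n, s ≤ a n + h n := by
      intro n
      have := (plin_mem_floor (hh n) s).2
      rw [hadef]; dsimp only; linarith [this, mul_add (h n) ((⌊s / h n⌋ : ℝ)) 1, (mul_one (h n))]
    have hslope : Filter.Tendsto (fun n => (h n)⁻¹ • (γ (a n + h n) - γ (a n)))
        Filter.atTop (nhds (deriv γ s)) := slope_tendsto hsd hh hh0 h_a_le h_le_b
    have hd_eq : ∀ n, deriv (P n) s = (h n)⁻¹ • (γ (a n + h n) - γ (a n)) :=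
      fun n => hderiv_eq s hsZ n
    have hdtend : Filter.Tendsto (fun n => deriv (P n) s) Filter.atTop (nhds (deriv γ s)) := by
      refine hslope.congr fun n => (hd_eq n).symm
    have hPtend : Filter.Tendsto (fun n => P n s) Filter.atTop (nhds (γ s)) := by
      rw [tendsto_iff_dist_tendsto_zero]
      have hub : ∀ n, dist (P n s) (γ s) ≤ 2 * M * h n := by
        intro n
        have e1 : dist (P n s) (γ (a n)) ≤ M * h n := by
          have : P n (a n) = γ (a n) := hnode n _
          rw [← this]
          calc dist (P n s) (P n (a n)) ≤ M * dist s (a n) := (hPlip n).dist_le_mul _ _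
            _ ≤ M * h n := by
                refine mul_le_mul_of_nonneg_left ?_ M.2
                rw [Real.dist_eq, abs_of_nonneg (by linarith [h_a_le n])]
                linarith [h_le_b n]
        have e2 : dist (γ (a n)) (γ s) ≤ M * h n := by
          calc dist (γ (a n)) (γ s) ≤ M * dist (a n) s := hγM.dist_le_mul _ _
            _ ≤ M * h n := by
                refine mul_le_mul_of_nonneg_left ?_ M.2
                rw [Real.dist_eq, abs_of_nonpos (by linarith [h_a_le n])]
                linarith [h_le_b n]
        calc dist (P n s) (γ s) ≤ dist (P n s) (γ (a n)) + dist (γ (a n)) (γ s) :=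
              dist_triangle _ _ _
          _ ≤ 2 * M * h n := by linarith
      have h2M : Filter.Tendsto (fun n => 2 * (M : ℝ) * h n) Filter.atTop (nhds 0) := by
        have := hh0.const_mul (2 * (M : ℝ))
        rwa [mul_zero] at this
      exact squeeze_zero (fun n => dist_nonneg) hub h2M
    have htriple : Filter.Tendsto
        (fun n => ((P n s, (s, deriv (P n) s)) :
          EuclideanSpace ℝ (Fin d) × ℝ × EuclideanSpace ℝ (Fin d)))
        Filter.atTop (nhds (γ s, (s, deriv γ s))) :=
      hPtend.prodMk_nhds (tendsto_const_nhds.prodMk_nhds hdtend)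
    exact (hLcont.tendsto (γ s, (s, deriv γ s))).comp htriple
  -- dominated convergence
  have hDCT : Filter.Tendsto (fun n => ∫ s, F n s ∂μ) Filter.atTop (nhds (∫ s, f s ∂μ)) :=
    tendsto_integral_of_dominated_convergence (fun _ => C) hFmeas hbound_int h_bound h_lim
  have hconv : ∀ n, (∫ s in (0 : ℝ)..t, L (P n s) s (deriv (P n) s)) = ∫ s, F n s ∂μ := by
    intro n
    rw [intervalIntegral.integral_of_le ht.le]
  have hconv2 : (∫ s in (0 : ℝ)..t, L (γ s) s (deriv γ s)) = ∫ s, f s ∂μ := by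
    rw [intervalIntegral.integral_of_le ht.le]
  rw [hconv2]
  refine ge_of_tendsto' (hDCT.add_const (w (γ 0))) fun n => ?_
  rw [← hconv n]
  exact hineq n
end

section
/- Regularity of Lipschitz minimizers: let L satisfy (L1)–(L3) (C², positive definite ∂²L/∂ξ², uniformly superlinear in ξ). Suppose γ : [0,t] → ℝ^d is Lipschitz and there is a constant c ∈ ℝ^d such that ∂L/∂ξ(γ(s), s, γ'(s)) = c + ∫₀ˢ ∂L/∂x(γ(τ), τ, γ'(τ)) dτ for a.e. s ∈ [0,t]. Then γ is C² on [0,t] and satisfies the Euler–Lagrange equation d/ds [∂L/∂ξ(γ(s),s,γ'(s))] = ∂L/∂x(γ(s),s,γ'(s)) for all s ∈ [0,t]. -/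
open MeasureTheory intervalIntegral
open scoped RealInnerProductSpace

open InnerProductSpace

namespace LipMinReg

variable {d : ℕ}

abbrev EE (d : ℕ) : Type := EuclideanSpace ℝ (Fin d)

noncomputable def j3 (d : ℕ) : EE d →L[ℝ] EE d × ℝ × EE d :=
  (0 : EE d →L[ℝ] EE d).prod ((0 : EE d →L[ℝ] ℝ).prod (ContinuousLinearMap.id ℝ (EE d)))

noncomputable def j1 (d : ℕ) : EE d →L[ℝ] EE d × ℝ × EE d :=
  (ContinuousLinearMap.id ℝ (EE d)).prod (0 : EE d →L[ℝ] ℝ × EE d)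

variable (L : EE d → ℝ → EE d → ℝ)

def Lp : EE d × ℝ × EE d → ℝ := fun q => L q.1 q.2.1 q.2.2

noncomputable def G (q : EE d × ℝ × EE d) : EE d := gradient (fun η => L q.1 q.2.1 η) q.2.2

noncomputable def Gx (q : EE d × ℝ × EE d) : EE d := gradient (fun z => L z q.2.1 q.2.2) q.1

variable {L}

lemma hasFDerivAt_emb3 (x : EE d) (s : ℝ) (ξ : EE d) :
    HasFDerivAt (fun η : EE d => ((x, s, η) : EE d × ℝ × EE d)) (j3 d) ξ :=
  (hasFDerivAt_const x ξ).prodMk ((hasFDerivAt_const s ξ).prodMk (hasFDerivAt_id ξ))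

lemma hasFDerivAt_emb1 (x : EE d) (s : ℝ) (ξ : EE d) :
    HasFDerivAt (fun z : EE d => ((z, s, ξ) : EE d × ℝ × EE d)) (j1 d) x :=
  (hasFDerivAt_id x).prodMk (hasFDerivAt_const ((s, ξ) : ℝ × EE d) x)

section smooth
variable (hC2 : ContDiff ℝ 2 (Lp L))
include hC2

lemma G_eq (q : EE d × ℝ × EE d) :
    G L q = (toDual ℝ (EE d)).symm ((fderiv ℝ (Lp L) q).comp (j3 d)) := by
  obtain ⟨x, s, ξ⟩ := q
  have hd : HasFDerivAt (fun η : EE d => L x s η)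
      ((fderiv ℝ (Lp L) (x, s, ξ)).comp (j3 d)) ξ :=
    by
      have h := HasFDerivAt.comp (f := fun η : EE d => ((x, s, η) : EE d × ℝ × EE d)) ξ
        ((hC2.differentiable (by norm_num) (x, s, ξ)).hasFDerivAt) (hasFDerivAt_emb3 x s ξ)
      exact h
  unfold G gradient
  rw [hd.fderiv]

lemma Gx_eq (q : EE d × ℝ × EE d) :
    Gx L q = (toDual ℝ (EE d)).symm ((fderiv ℝ (Lp L) q).comp (j1 d)) := by
  obtain ⟨x, s, ξ⟩ := q
  have hd : HasFDerivAt (fun z : EE d => L z s ξ)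
      ((fderiv ℝ (Lp L) (x, s, ξ)).comp (j1 d)) x :=
    by
      have h := HasFDerivAt.comp (f := fun z : EE d => ((z, s, ξ) : EE d × ℝ × EE d)) x
        ((hC2.differentiable (by norm_num) (x, s, ξ)).hasFDerivAt) (hasFDerivAt_emb1 x s ξ)
      exact h
  unfold Gx gradient
  rw [hd.fderiv]

lemma contDiff_G : ContDiff ℝ 1 (G L) := by
  have h1 : ContDiff ℝ 1 (fun q : EE d × ℝ × EE d => (fderiv ℝ (Lp L) q).comp (j3 d)) :=
    (hC2.fderiv_right (m := 1) (by norm_num)).clm_comp contDiff_const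
  have h2 : ContDiff ℝ 1 (fun q : EE d × ℝ × EE d =>
      (toDual ℝ (EE d)).symm ((fderiv ℝ (Lp L) q).comp (j3 d))) :=
    ((toDual ℝ (EE d)).symm.toContinuousLinearEquiv.toContinuousLinearMap.contDiff).comp h1
  have heq : G L = fun q : EE d × ℝ × EE d =>
      (toDual ℝ (EE d)).symm ((fderiv ℝ (Lp L) q).comp (j3 d)) :=
    funext fun q => G_eq hC2 q
  rw [heq]
  exact h2

lemma contDiff_Gx : ContDiff ℝ 1 (Gx L) := by
  have h1 : ContDiff ℝ 1 (fun q : EE d × ℝ × EE d => (fderiv ℝ (Lp L) q).comp (j1 d)) :=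
    (hC2.fderiv_right (m := 1) (by norm_num)).clm_comp contDiff_const
  have h2 : ContDiff ℝ 1 (fun q : EE d × ℝ × EE d =>
      (toDual ℝ (EE d)).symm ((fderiv ℝ (Lp L) q).comp (j1 d))) :=
    ((toDual ℝ (EE d)).symm.toContinuousLinearEquiv.toContinuousLinearMap.contDiff).comp h1
  have heq : Gx L = fun q : EE d × ℝ × EE d =>
      (toDual ℝ (EE d)).symm ((fderiv ℝ (Lp L) q).comp (j1 d)) :=
    funext fun q => Gx_eq hC2 q
  rw [heq]
  exact h2


lemma contDiff_G_partial (x : EE d) (s : ℝ) :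
    ContDiff ℝ 1 (fun ζ : EE d => G L (x, s, ζ)) :=
  (contDiff_G hC2).comp (contDiff_const.prodMk (contDiff_const.prodMk contDiff_id))

end smooth

section mono
variable (hC2 : ContDiff ℝ 2 (Lp L))
variable (hpos : ∀ (x : EE d) (s : ℝ) (ξ v : EE d),
      v ≠ 0 → 0 < ⟪v, fderiv ℝ (fun ζ => gradient (fun η => L x s η) ζ) ξ v⟫)
include hC2 hpos

lemma G_strict_mono (x : EE d) (s : ℝ) {ξ₁ ξ₂ : EE d} (hne : ξ₁ ≠ ξ₂) :
    0 < ⟪ξ₁ - ξ₂, G L (x, s, ξ₁) - G L (x, s, ξ₂)⟫ := by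
  set v := ξ₁ - ξ₂ with hv
  have hvne : v ≠ 0 := sub_ne_zero.mpr hne
  have hGd : Differentiable ℝ (fun ζ : EE d => G L (x, s, ζ)) :=
    (contDiff_G_partial hC2 x s).differentiable one_ne_zero
  set φ : ℝ → ℝ := fun r => ⟪v, G L (x, s, ξ₂ + r • v)⟫ with hφdef
  have hφ : ∀ r : ℝ, HasDerivAt φ
      ⟪v, fderiv ℝ (fun ζ : EE d => G L (x, s, ζ)) (ξ₂ + r • v) v⟫ r := by
    intro r
    have h1 : HasDerivAt (fun r : ℝ => ξ₂ + r • v) v r := by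
      simpa using ((hasDerivAt_id r).smul_const v).const_add ξ₂
    have h2 : HasFDerivAt (fun ζ : EE d => G L (x, s, ζ))
        (fderiv ℝ (fun ζ : EE d => G L (x, s, ζ)) (ξ₂ + r • v)) (ξ₂ + r • v) :=
      (hGd _).hasFDerivAt
    have h3 := (h2.comp_hasDerivAt r h1)
    have h4 := ((innerSL ℝ v).hasFDerivAt.comp_hasDerivAt r h3)
    exact h4
  have hmono : StrictMono φ := by
    apply strictMono_of_deriv_pos
    intro r
    rw [(hφ r).deriv]
    exact hpos x s (ξ₂ + r • v) v hvne
  have h01 : φ 0 < φ 1 := hmono zero_lt_one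
  have e0 : φ 0 = ⟪v, G L (x, s, ξ₂)⟫ := by simp [hφdef]
  have e1 : φ 1 = ⟪v, G L (x, s, ξ₁)⟫ := by
    have h5 : ξ₂ + (1 : ℝ) • v = ξ₁ := by
      rw [one_smul, hv]; abel
    show ⟪v, G L (x, s, ξ₂ + (1 : ℝ) • v)⟫ = _
    rw [h5]
  have := sub_pos.mpr h01
  rw [e0, e1, ← inner_sub_right] at this
  exact this

lemma G_inj (x : EE d) (s : ℝ) {ξ₁ ξ₂ : EE d}
    (h : G L (x, s, ξ₁) = G L (x, s, ξ₂)) : ξ₁ = ξ₂ := by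
  by_contra hne
  have := G_strict_mono hC2 hpos x s hne
  rw [h, sub_self, inner_zero_right] at this
  exact lt_irrefl 0 this

end mono

section surj
variable (hC2 : ContDiff ℝ 2 (Lp L))
variable (hsuper : ∀ a : ℝ, 0 ≤ a → ∃ c : ℝ, ∀ x s ξ, L x s ξ ≥ a * ‖ξ‖ + c)
include hC2 hsuper

lemma differentiable_L_partial (x : EE d) (s : ℝ) :
    Differentiable ℝ (fun η : EE d => L x s η) := by
  intro ξ
  exact ((hC2.differentiable (by norm_num) (x, s, ξ)).hasFDerivAt.comp ξ
    (hasFDerivAt_emb3 x s ξ)).differentiableAt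

lemma G_surj (x : EE d) (s : ℝ) (p : EE d) : ∃ ξ : EE d, G L (x, s, ξ) = p := by
  obtain ⟨c₀, hc₀⟩ := hsuper (‖p‖ + 1) (by positivity)
  set f : EE d → ℝ := fun ξ => L x s ξ - ⟪p, ξ⟫ with hfdef
  have hF1d : Differentiable ℝ (fun η : EE d => L x s η) :=
    differentiable_L_partial hC2 hsuper x s
  have hF1c : Continuous (fun η : EE d => L x s η) := hF1d.continuous
  have hfc : Continuous f := hF1c.sub (continuous_const.inner continuous_id)
  have hb : ∀ ξ : EE d, ‖ξ‖ + c₀ ≤ f ξ := by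
    intro ξ
    have h1 : L x s ξ ≥ (‖p‖ + 1) * ‖ξ‖ + c₀ := hc₀ x s ξ
    have h2 : ⟪p, ξ⟫ ≤ ‖p‖ * ‖ξ‖ := real_inner_le_norm p ξ
    have : (‖p‖ + 1) * ‖ξ‖ = ‖p‖ * ‖ξ‖ + ‖ξ‖ := by ring
    simp only [hfdef]
    linarith
  have hcoer : Filter.Tendsto f (Filter.cocompact (EE d)) Filter.atTop := by
    apply Filter.tendsto_atTop_mono hb
    exact Filter.tendsto_atTop_add_const_right _ c₀ tendsto_norm_cocompact_atTop
  obtain ⟨ξ₀, hξ₀⟩ := hfc.exists_forall_le hcoer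
  have hmin : IsLocalMin f ξ₀ := Filter.Eventually.of_forall hξ₀
  have hinner : HasFDerivAt (fun ξ : EE d => ⟪p, ξ⟫) (innerSL ℝ p) ξ₀ :=
    (innerSL ℝ p).hasFDerivAt
  have hfderiv : fderiv ℝ f ξ₀
      = fderiv ℝ (fun η : EE d => L x s η) ξ₀ - innerSL ℝ p :=
    ((hF1d ξ₀).hasFDerivAt.sub hinner).fderiv
  have h0 : fderiv ℝ f ξ₀ = 0 := hmin.fderiv_eq_zero
  have hGp : fderiv ℝ (fun η : EE d => L x s η) ξ₀ = innerSL ℝ p := by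
    rw [h0] at hfderiv
    have := hfderiv.symm
    rwa [sub_eq_zero] at this
  refine ⟨ξ₀, ?_⟩
  show gradient (fun η : EE d => L x s η) ξ₀ = p
  unfold gradient
  rw [hGp]
  have : innerSL ℝ p = toDual ℝ (EE d) p := by
    ext w
    simp [InnerProductSpace.toDual_apply_apply]
  rw [this, LinearIsometryEquiv.symm_apply_apply]

end surj

section inv
variable (hC2 : ContDiff ℝ 2 (Lp L))
variable (hpos : ∀ (x : EE d) (s : ℝ) (ξ v : EE d),
      v ≠ 0 → 0 < ⟪v, fderiv ℝ (fun ζ => gradient (fun η => L x s η) ζ) ξ v⟫)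
variable (hsuper : ∀ a : ℝ, 0 ≤ a → ∃ c : ℝ, ∀ x s ξ, L x s ξ ≥ a * ‖ξ‖ + c)

noncomputable def Ginv (q : EE d × ℝ × EE d) : EE d :=
  Classical.choose (G_surj hC2 hsuper q.1 q.2.1 q.2.2)

lemma Ginv_spec (q : EE d × ℝ × EE d) :
    G L (q.1, q.2.1, Ginv hC2 hsuper q) = q.2.2 :=
  Classical.choose_spec (G_surj hC2 hsuper q.1 q.2.1 q.2.2)

noncomputable def Fmap (q : EE d × ℝ × EE d) : EE d × ℝ × EE d := (q.1, q.2.1, G L q)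

noncomputable def Finv (y : EE d × ℝ × EE d) : EE d × ℝ × EE d :=
  (y.1, y.2.1, Ginv hC2 hsuper y)

include hC2

lemma Fmap_contDiff : ContDiff ℝ 1 (Fmap (L := L)) :=
  contDiff_fst.prodMk ((contDiff_fst.comp contDiff_snd).prodMk (contDiff_G hC2))

include hsuper

lemma Fmap_rightInv (y : EE d × ℝ × EE d) : Fmap (L := L) (Finv hC2 hsuper y) = y := by
  unfold Fmap Finv
  exact Prod.ext rfl (Prod.ext rfl (Ginv_spec hC2 hsuper y))

include hpos

lemma Fmap_leftInv (q : EE d × ℝ × EE d) : Finv hC2 hsuper (Fmap (L := L) q) = q := by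
  unfold Fmap Finv
  refine Prod.ext rfl (Prod.ext rfl ?_)
  apply G_inj hC2 hpos q.1 q.2.1
  show G L (q.1, q.2.1, _) = _
  rw [Ginv_spec hC2 hsuper (q.1, q.2.1, G L q)]

omit hpos hsuper in
lemma fderiv_G_partial (x : EE d) (s : ℝ) (ξ : EE d) :
    fderiv ℝ (fun ζ : EE d => G L (x, s, ζ)) ξ
      = (fderiv ℝ (G L) (x, s, ξ)).comp (j3 d) := by
  exact (((contDiff_G hC2).differentiable one_ne_zero (x, s, ξ)).hasFDerivAt.comp ξ
    (hasFDerivAt_emb3 x s ξ)).fderiv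

lemma contDiffAt_Finv (y₀ : EE d × ℝ × EE d) :
    ContDiffAt ℝ 1 (Finv hC2 hsuper) y₀ := by
  classical
  set q₀ := Finv hC2 hsuper y₀ with hq₀
  have hy₀ : Fmap (L := L) q₀ = y₀ := Fmap_rightInv hC2 hsuper y₀
  -- the derivative of Fmap at q₀, as a continuous linear map
  set DG := fderiv ℝ (G L) q₀ with hDG
  set A : (EE d × ℝ × EE d) →L[ℝ] (EE d × ℝ × EE d) :=
    (ContinuousLinearMap.fst ℝ (EE d) (ℝ × EE d)).prod
      (((ContinuousLinearMap.fst ℝ ℝ (EE d)).comp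
        (ContinuousLinearMap.snd ℝ (EE d) (ℝ × EE d))).prod DG) with hA
  have hFd : HasFDerivAt (Fmap (L := L)) A q₀ := by
    apply HasFDerivAt.prodMk (hasFDerivAt_fst)
    exact HasFDerivAt.prodMk (hasFDerivAt_fst.comp q₀ hasFDerivAt_snd)
      (((contDiff_G hC2).differentiable one_ne_zero q₀).hasFDerivAt)
  have hker : ∀ v : EE d × ℝ × EE d, A v = 0 → v = 0 := by
    intro v hv
    have h1 : v.1 = 0 := congrArg Prod.fst hv
    have h2 : v.2.1 = 0 := congrArg (fun w : EE d × ℝ × EE d => w.2.1) hv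
    have h4 : DG v = 0 := congrArg (fun w : EE d × ℝ × EE d => w.2.2) hv
    have hv3 : v.2.2 = 0 := by
      by_contra hne
      have hp := hpos q₀.1 q₀.2.1 q₀.2.2 v.2.2 hne
      have heq : fderiv ℝ (fun ζ : EE d => gradient (fun η => L q₀.1 q₀.2.1 η) ζ) q₀.2.2
          = DG.comp (j3 d) := fderiv_G_partial hC2 q₀.1 q₀.2.1 q₀.2.2
      rw [heq] at hp
      have hvv : ((0 : EE d), ((0 : ℝ), v.2.2)) = v := by rw [← h1, ← h2]
      have hj : (DG.comp (j3 d)) v.2.2 = DG v := by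
        show DG ((0 : EE d), (0 : ℝ), v.2.2) = DG v
        rw [hvv]
      rw [hj, h4, inner_zero_right] at hp
      exact lt_irrefl 0 hp
    have : v = ((v.1 : EE d), (v.2.1 : ℝ), v.2.2) := rfl
    rw [this, h1, h2, hv3]
    rfl
  have hinj : Function.Injective A := by
    intro u w huw
    have := hker (u - w) (by rw [map_sub, huw, sub_self])
    exact sub_eq_zero.mp this
  have hbij : Function.Bijective A :=
    ⟨hinj, LinearMap.injective_iff_surjective.mp hinj⟩
  set A' : (EE d × ℝ × EE d) ≃L[ℝ] (EE d × ℝ × EE d) :=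
    LinearEquiv.toContinuousLinearEquiv (LinearEquiv.ofBijective A.toLinearMap hbij) with hA'
  have hFd' : HasFDerivAt (Fmap (L := L)) (A' : (EE d × ℝ × EE d) →L[ℝ] (EE d × ℝ × EE d)) q₀ := by
    have : (A' : (EE d × ℝ × EE d) →L[ℝ] (EE d × ℝ × EE d)) = A :=
      ContinuousLinearMap.ext fun v => rfl
    rw [this]; exact hFd
  have hq : ContDiffAt ℝ 1 (Fmap (L := L)) q₀ := (Fmap_contDiff hC2).contDiffAt
  have hli : ContDiffAt ℝ 1 (hq.localInverse hFd' one_ne_zero) (Fmap (L := L) q₀) :=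
    hq.to_localInverse hFd' one_ne_zero
  have hev : ∀ᶠ y in nhds (Fmap (L := L) q₀),
      Fmap (L := L) (hq.localInverse hFd' one_ne_zero y) = y :=
    (hq.hasStrictFDerivAt' hFd' one_ne_zero).eventually_right_inverse
  have heq : Finv hC2 hsuper =ᶠ[nhds (Fmap (L := L) q₀)] hq.localInverse hFd' one_ne_zero := by
    filter_upwards [hev] with y hy
    conv_lhs => rw [← hy]
    rw [Fmap_leftInv hC2 hpos hsuper]
  have := hli.congr_of_eventuallyEq heq
  rwa [hy₀] at this

lemma contDiff_Ginv : ContDiff ℝ 1 (Ginv hC2 hsuper) := by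
  have h1 : ContDiff ℝ 1 (Finv hC2 hsuper) :=
    contDiff_iff_contDiffAt.mpr (contDiffAt_Finv hC2 hpos hsuper)
  have h2 : Ginv hC2 hsuper = fun y => (Finv hC2 hsuper y).2.2 := rfl
  rw [h2]
  exact (contDiff_snd.comp contDiff_snd).comp h1

end inv

section ftc

lemma tendsto_smul_sub_of_hasDerivAt {f : ℝ → EE d} {u : ℝ} {v : EE d}
    (hf : HasDerivAt f v u) :
    Filter.Tendsto (fun n : ℕ => ((n : ℝ) + 1) • (f (u + ((n : ℝ) + 1)⁻¹) - f u))
      Filter.atTop (nhds v) := by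
  have hs := hasDerivAt_iff_tendsto_slope.mp hf
  have h1 : Filter.Tendsto (fun n : ℕ => u + ((n : ℝ) + 1)⁻¹) Filter.atTop
      (nhdsWithin u {u}ᶜ) := by
    apply tendsto_nhdsWithin_of_tendsto_nhds_of_eventually_within
    · have h2 : Filter.Tendsto (fun n : ℕ => ((n : ℝ) + 1)⁻¹) Filter.atTop (nhds 0) := by
        simpa [one_div] using tendsto_one_div_add_atTop_nhds_zero_nat (𝕜 := ℝ)
      simpa using tendsto_const_nhds.add h2
    · apply Filter.Eventually.of_forall
      intro n
      have hpos : (0 : ℝ) < ((n : ℝ) + 1)⁻¹ := by positivity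
      simp only [Set.mem_compl_iff, Set.mem_singleton_iff]
      exact ne_of_gt (lt_add_of_pos_right u hpos)
  have h2 := hs.comp h1
  apply h2.congr
  intro n
  rw [Function.comp_apply, slope_def_module]
  congr 1
  rw [add_sub_cancel_left, inv_inv]

lemma lipschitz_integral_deriv {γ : ℝ → EE d} {M : NNReal} (hγ : LipschitzWith M γ)
    {a b : ℝ} (hab : a ≤ b) :
    ∫ s in a..b, deriv γ s = γ b - γ a := by
  have hcont := hγ.continuous
  set F : ℝ → EE d := fun u => ∫ x in a..u, γ x with hF
  have hFd : ∀ u : ℝ, HasDerivAt F (γ u) u := fun u =>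
    (hcont.integral_hasStrictDerivAt a u).hasDerivAt
  set fn : ℕ → ℝ → EE d :=
    fun n s => ((n : ℝ) + 1) • (γ (s + ((n : ℝ) + 1)⁻¹) - γ s) with hfn
  have hint : ∀ u v : ℝ, IntervalIntegrable γ volume u v := fun u v =>
    hcont.intervalIntegrable u v
  have hfncont : ∀ n : ℕ, Continuous (fn n) := by
    intro n
    exact ((hcont.comp (continuous_add_right _)).sub hcont).const_smul ((n : ℝ) + 1)
  have hIfn : ∀ n : ℕ, (∫ s in a..b, fn n s) =
      ((n : ℝ) + 1) • (F (b + ((n : ℝ) + 1)⁻¹) - F b)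
        - ((n : ℝ) + 1) • (F (a + ((n : ℝ) + 1)⁻¹) - F a) := by
    intro n
    set h : ℝ := ((n : ℝ) + 1)⁻¹ with hh
    have hint1 : IntervalIntegrable (fun s => γ (s + h)) volume a b :=
      ((hcont.comp (continuous_add_right h) : Continuous fun s : ℝ => γ (s + h))).intervalIntegrable a b
    have e1 : (∫ s in a..b, fn n s)
        = ((n : ℝ) + 1) • ((∫ s in a..b, γ (s + h)) - ∫ s in a..b, γ s) := by
      calc (∫ s in a..b, fn n s)
          = ∫ s in a..b, ((n : ℝ) + 1) • (γ (s + h) - γ s) := rfl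
        _ = ((n : ℝ) + 1) • ∫ s in a..b, (γ (s + h) - γ s) :=
            intervalIntegral.integral_smul _ _
        _ = ((n : ℝ) + 1) • ((∫ s in a..b, γ (s + h)) - ∫ s in a..b, γ s) := by
            rw [intervalIntegral.integral_sub hint1 (hint a b)]
    have e2 : (∫ s in a..b, γ (s + h)) = ∫ s in (a + h)..(b + h), γ s :=
      intervalIntegral.integral_comp_add_right γ h
    have e3 : (∫ s in (a + h)..(b + h), γ s) = F (b + h) - F (a + h) :=
      (intervalIntegral.integral_interval_sub_left (hint a (b + h)) (hint a (a + h))).symm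
    have e4 : (∫ s in a..b, γ s) = F b - F a := by
      have : F a = 0 := intervalIntegral.integral_same
      rw [this, sub_zero]
    rw [e1, e2, e3, e4, ← smul_sub]
    congr 1
    abel
  have hlimI : Filter.Tendsto (fun n : ℕ => ∫ s in a..b, fn n s) Filter.atTop
      (nhds (γ b - γ a)) := by
    simp_rw [hIfn]
    exact (tendsto_smul_sub_of_hasDerivAt (hFd b)).sub
      (tendsto_smul_sub_of_hasDerivAt (hFd a))
  have hlimD : Filter.Tendsto (fun n : ℕ => ∫ s in a..b, fn n s) Filter.atTop
      (nhds (∫ s in a..b, deriv γ s)) := by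
    simp_rw [intervalIntegral.integral_of_le hab]
    apply MeasureTheory.tendsto_integral_of_dominated_convergence
      (bound := fun _ => (M : ℝ))
    · exact fun n => ((hfncont n).aestronglyMeasurable).restrict
    · exact MeasureTheory.integrable_const _
    · intro n
      apply Filter.Eventually.of_forall
      intro s
      have hd : dist (γ (s + ((n : ℝ) + 1)⁻¹)) (γ s) ≤ M * ((n : ℝ) + 1)⁻¹ := by
        have := hγ.dist_le_mul (s + ((n : ℝ) + 1)⁻¹) s
        simpa [Real.dist_eq, abs_inv,
          abs_of_nonneg (by positivity : (0:ℝ) ≤ (n : ℝ) + 1)] using this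
      have hnorm : ‖fn n s‖ = ((n : ℝ) + 1) * ‖γ (s + ((n : ℝ) + 1)⁻¹) - γ s‖ := by
        rw [hfn]
        simp [norm_smul, abs_of_nonneg (by positivity : (0:ℝ) ≤ (n : ℝ) + 1)]
      rw [hnorm, ← dist_eq_norm]
      calc ((n : ℝ) + 1) * dist (γ (s + ((n : ℝ) + 1)⁻¹)) (γ s)
          ≤ ((n : ℝ) + 1) * ((M : ℝ) * ((n : ℝ) + 1)⁻¹) := by
            apply mul_le_mul_of_nonneg_left hd (by positivity)
        _ = (M : ℝ) * (((n : ℝ) + 1) * ((n : ℝ) + 1)⁻¹) := by ring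
        _ = (M : ℝ) := by
            rw [mul_inv_cancel₀ (by positivity : ((n : ℝ) + 1) ≠ 0), mul_one]
    · have hae : ∀ᵐ s ∂(volume.restrict (Set.Ioc a b)), DifferentiableAt ℝ γ s :=
        MeasureTheory.ae_restrict_of_ae (hγ.ae_differentiableAt (μ := volume))
      filter_upwards [hae] with s hs
      exact tendsto_smul_sub_of_hasDerivAt hs.hasDerivAt
  exact tendsto_nhds_unique hlimD hlimI

lemma norm_deriv_le_of_lipschitz {γ : ℝ → EE d} {M : NNReal} (hγ : LipschitzWith M γ)
    (s : ℝ) : ‖deriv γ s‖ ≤ (M : ℝ) := by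
  by_cases hd : DifferentiableAt ℝ γ s
  · exact hd.hasDerivAt.le_of_lipschitz hγ
  · rw [deriv_zero_of_not_differentiableAt hd]
    simp

end ftc

end LipMinReg


open LipMinReg

/-- Regularity of Lipschitz minimizers: under (L1)–(L3), if a Lipschitz curve
`γ` satisfies the integrated Euler–Lagrange (du Bois-Reymond) equation
`∂L/∂ξ(γ s, s, γ' s) = c + ∫₀ˢ ∂L/∂x(γ τ, τ, γ' τ) dτ` for a.e. `s ∈ [0,t]`,
then `γ` is `C²` on `[0,t]` and satisfies the Euler–Lagrange equation
`d/ds [∂L/∂ξ(γ,s,γ')] = ∂L/∂x(γ,s,γ')` on `[0,t]`. -/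
theorem lipschitz_minimizer_regularity (d : ℕ) (t : ℝ) (ht : 0 < t)
    (L : EuclideanSpace ℝ (Fin d) → ℝ → EuclideanSpace ℝ (Fin d) → ℝ)
    (hC2 : ContDiff ℝ 2 fun q : EuclideanSpace ℝ (Fin d) × ℝ × EuclideanSpace ℝ (Fin d) =>
      L q.1 q.2.1 q.2.2)
    (hpos : ∀ (x : EuclideanSpace ℝ (Fin d)) (s : ℝ) (ξ v : EuclideanSpace ℝ (Fin d)),
      v ≠ 0 → 0 < ⟪v, fderiv ℝ (fun ζ => gradient (fun η => L x s η) ζ) ξ v⟫)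
    (hsuper : ∀ a : ℝ, 0 ≤ a → ∃ c : ℝ, ∀ x s ξ, L x s ξ ≥ a * ‖ξ‖ + c)
    (γ : ℝ → EuclideanSpace ℝ (Fin d)) (hγLip : ∃ M : NNReal, LipschitzWith M γ)
    (c : EuclideanSpace ℝ (Fin d))
    (hEL : ∀ᵐ s ∂(volume.restrict (Set.Icc (0 : ℝ) t)),
      gradient (fun ξ => L (γ s) s ξ) (deriv γ s)
        = c + ∫ τ in (0 : ℝ)..s, gradient (fun z => L z τ (deriv γ τ)) (γ τ)) :
    ContDiffOn ℝ 2 γ (Set.Icc (0 : ℝ) t) ∧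
    ∀ s ∈ Set.Icc (0 : ℝ) t,
      HasDerivWithinAt
        (fun r => gradient (fun ξ => L (γ r) r ξ) (derivWithin γ (Set.Icc (0 : ℝ) t) r))
        (gradient (fun z => L z s (derivWithin γ (Set.Icc (0 : ℝ) t) s)) (γ s))
        (Set.Icc (0 : ℝ) t) s := by

  classical
  obtain ⟨M, hLip⟩ := hγLip
  have hC2' : ContDiff ℝ 2 (Lp L) := hC2
  have hγc : Continuous γ := hLip.continuous
  have hGxc : Continuous (Gx L) := (contDiff_Gx hC2').continuous
  have hUD : UniqueDiffOn ℝ (Set.Icc (0 : ℝ) t) := uniqueDiffOn_Icc ht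
  -- the integrand
  set g : ℝ → EuclideanSpace ℝ (Fin d) := fun τ => Gx L (γ τ, τ, deriv γ τ) with hgdef
  have hgmeas : AEStronglyMeasurable g volume :=
    hGxc.comp_aestronglyMeasurable
      (hγc.aestronglyMeasurable.prodMk (aestronglyMeasurable_id.prodMk
        (stronglyMeasurable_deriv γ).aestronglyMeasurable))
  have hgint : ∀ u v : ℝ, IntervalIntegrable g volume u v := by
    intro u v
    set K : Set (EuclideanSpace ℝ (Fin d) × ℝ × EuclideanSpace ℝ (Fin d)) :=
      (γ '' Set.uIcc u v) ×ˢ (Set.uIcc u v ×ˢ Metric.closedBall 0 (M : ℝ)) with hK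
    have hKcomp : IsCompact K :=
      (isCompact_uIcc.image hγc).prod (isCompact_uIcc.prod (isCompact_closedBall 0 (M : ℝ)))
    obtain ⟨C, hC⟩ := hKcomp.exists_bound_of_continuousOn hGxc.continuousOn
    rw [intervalIntegrable_iff]
    apply MeasureTheory.Integrable.mono'
      (MeasureTheory.integrableOn_const (C := C) measure_Ioc_lt_top.ne)
      hgmeas.restrict
    rw [MeasureTheory.ae_restrict_iff' measurableSet_Ioc]
    apply Filter.Eventually.of_forall
    intro τ hτ
    have hτ' : τ ∈ Set.uIcc u v := Set.uIoc_subset_uIcc (hτ : τ ∈ Set.uIoc u v)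
    apply hC
    refine ⟨Set.mem_image_of_mem γ hτ', hτ', ?_⟩
    rw [Metric.mem_closedBall, dist_zero_right]
    exact norm_deriv_le_of_lipschitz hLip τ
  -- the dual momentum
  set p : ℝ → EuclideanSpace ℝ (Fin d) := fun s => c + ∫ τ in (0 : ℝ)..s, g τ with hpdef
  have hpcont : Continuous p :=
    continuous_const.add (intervalIntegral.continuous_primitive hgint 0)
  -- the continuous representative of the velocity
  set h : ℝ → EuclideanSpace ℝ (Fin d) := fun s => Ginv hC2' hsuper (γ s, s, p s) with hhdef
  have hhc : Continuous h :=
    (contDiff_Ginv hC2' hpos hsuper).continuous.comp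
      (hγc.prodMk (continuous_id.prodMk hpcont))
  -- a.e. identification of the derivative
  have hae : ∀ᵐ s ∂(volume.restrict (Set.Icc (0 : ℝ) t)), deriv γ s = h s := by
    filter_upwards [hEL] with s hs
    apply G_inj hC2' hpos (γ s) s
    have h1 : G L (γ s, s, deriv γ s) = p s := hs
    have h2 : G L (γ s, s, h s) = p s := Ginv_spec hC2' hsuper (γ s, s, p s)
    rw [h1, h2]
  have hae' : ∀ᵐ τ ∂(volume : Measure ℝ), τ ∈ Set.Icc (0 : ℝ) t → deriv γ τ = h τ :=
    (MeasureTheory.ae_restrict_iff' measurableSet_Icc).mp hae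
  -- fundamental theorem of calculus for γ
  have hγφ : ∀ s ∈ Set.Icc (0 : ℝ) t, γ s = γ 0 + ∫ τ in (0 : ℝ)..s, h τ := by
    intro s hs
    have h1 : ∫ τ in (0 : ℝ)..s, deriv γ τ = γ s - γ 0 :=
      lipschitz_integral_deriv hLip hs.1
    have h2 : (∫ τ in (0 : ℝ)..s, deriv γ τ) = ∫ τ in (0 : ℝ)..s, h τ := by
      apply intervalIntegral.integral_congr_ae
      have hsub : Set.uIoc (0 : ℝ) s ⊆ Set.Icc (0 : ℝ) t := by
        rw [Set.uIoc_of_le hs.1]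
        exact Set.Ioc_subset_Icc_self.trans (Set.Icc_subset_Icc le_rfl hs.2)
      filter_upwards [hae'] with τ hτ hmem
      exact hτ (hsub hmem)
    rw [← h2, h1]
    abel
  -- the C¹ curve φ
  set φ : ℝ → EuclideanSpace ℝ (Fin d) := fun s => γ 0 + ∫ τ in (0 : ℝ)..s, h τ with hφdef
  have hφd : ∀ s : ℝ, HasDerivAt φ (h s) s := fun s =>
    ((hhc.integral_hasStrictDerivAt 0 s).hasDerivAt).const_add (γ 0)
  have hφeq : Set.EqOn γ φ (Set.Icc (0 : ℝ) t) := fun s hs => hγφ s hs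
  -- the continuous force term and C¹ momentum
  set gt : ℝ → EuclideanSpace ℝ (Fin d) := fun τ => Gx L (γ τ, τ, h τ) with hgtdef
  have hgtc : Continuous gt :=
    hGxc.comp (hγc.prodMk (continuous_id.prodMk hhc))
  set pt : ℝ → EuclideanSpace ℝ (Fin d) := fun s => c + ∫ τ in (0 : ℝ)..s, gt τ with hptdef
  have hptd : ∀ s : ℝ, HasDerivAt pt (gt s) s := fun s =>
    ((hgtc.integral_hasStrictDerivAt 0 s).hasDerivAt).const_add c
  have hppt : Set.EqOn p pt (Set.Icc (0 : ℝ) t) := by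
    intro s hs
    show c + _ = c + _
    congr 1
    apply intervalIntegral.integral_congr_ae
    have hsub : Set.uIoc (0 : ℝ) s ⊆ Set.Icc (0 : ℝ) t := by
      rw [Set.uIoc_of_le hs.1]
      exact Set.Ioc_subset_Icc_self.trans (Set.Icc_subset_Icc le_rfl hs.2)
    filter_upwards [hae'] with τ hτ hmem
    rw [hgdef, hgtdef]
    simp only
    rw [hτ (hsub hmem)]
  -- φ and pt are C¹
  have hφ1 : ContDiff ℝ 1 φ := by
    rw [contDiff_one_iff_deriv]
    refine ⟨fun s => (hφd s).differentiableAt, ?_⟩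
    have : deriv φ = h := funext fun s => (hφd s).deriv
    rw [this]; exact hhc
  have hpt1 : ContDiff ℝ 1 pt := by
    rw [contDiff_one_iff_deriv]
    refine ⟨fun s => (hptd s).differentiableAt, ?_⟩
    have : deriv pt = gt := funext fun s => (hptd s).deriv
    rw [this]; exact hgtc
  -- the C¹ velocity field
  set H : ℝ → EuclideanSpace ℝ (Fin d) := fun s => Ginv hC2' hsuper (φ s, s, pt s) with hHdef
  have hH1 : ContDiff ℝ 1 H :=
    (contDiff_Ginv hC2' hpos hsuper).comp (hφ1.prodMk (contDiff_id.prodMk hpt1))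
  have hhH : Set.EqOn h H (Set.Icc (0 : ℝ) t) := by
    intro s hs
    rw [hhdef, hHdef]
    simp only
    rw [hφeq hs, hppt hs]
  -- C² regularity of φ, hence of γ
  have hdw : ∀ s ∈ Set.Icc (0 : ℝ) t, derivWithin φ (Set.Icc (0 : ℝ) t) s = h s :=
    fun s hs => ((hφd s).hasDerivWithinAt).derivWithin (hUD s hs)
  have h2' : ContDiffOn ℝ 1 (derivWithin φ (Set.Icc (0 : ℝ) t)) (Set.Icc (0 : ℝ) t) := by
    apply (hH1.contDiffOn).congr
    intro s hs
    rw [hdw s hs]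
    exact hhH hs
  have hφ2 : ContDiffOn ℝ 2 φ (Set.Icc (0 : ℝ) t) := by
    rw [show (2 : WithTop ℕ∞) = 1 + 1 from rfl, contDiffOn_succ_iff_derivWithin hUD]
    refine ⟨fun s hs => (hφd s).differentiableAt.differentiableWithinAt, ?_, h2'⟩
    intro hcon
    exact absurd hcon (by simp)
  have hγ2 : ContDiffOn ℝ 2 γ (Set.Icc (0 : ℝ) t) := hφ2.congr hφeq
  refine ⟨hγ2, ?_⟩
  -- Euler–Lagrange equation
  have hγdw : ∀ s ∈ Set.Icc (0 : ℝ) t, derivWithin γ (Set.Icc (0 : ℝ) t) s = h s := by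
    intro s hs
    have h1 : HasDerivWithinAt γ (h s) (Set.Icc (0 : ℝ) t) s :=
      ((hφd s).hasDerivWithinAt).congr (fun r hr => hφeq hr) (hφeq hs)
    exact h1.derivWithin (hUD s hs)
  intro s hs
  have hfun : ∀ r ∈ Set.Icc (0 : ℝ) t,
      G L (γ r, r, derivWithin γ (Set.Icc (0 : ℝ) t) r) = p r := by
    intro r hr
    rw [hγdw r hr]
    exact Ginv_spec hC2' hsuper (γ r, r, p r)
  have hpder : HasDerivWithinAt p (gt s) (Set.Icc (0 : ℝ) t) s :=
    ((hptd s).hasDerivWithinAt).congr (fun r hr => hppt hr) (hppt hs)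
  have hfinal : HasDerivWithinAt
      (fun r => G L (γ r, r, derivWithin γ (Set.Icc (0 : ℝ) t) r)) (gt s)
      (Set.Icc (0 : ℝ) t) s :=
    hpder.congr (fun r hr => hfun r hr) (hfun s hs)
  have hval : gradient (fun z => L z s (derivWithin γ (Set.Icc (0 : ℝ) t) s)) (γ s) = gt s := by
    rw [hγdw s hs]
    rfl
  rw [hval]
  exact hfinal
end

section
/- Riemann-sum approximation of the action along a piecewise-C¹ curve: let L be continuous and γ : [0,t] → ℝ^d be continuous and piecewise C¹ with m pieces, with γ(t) = x. For K ∈ ℕ set h = t/K, t_k = hk, and y_K = (γ(t_0), …, γ(t_{K-1})) ∈ (ℝ^d)^K. Then the discrete action L_w^K(y_K) = Σ_{k=0}^{K-1} L(γ(t_k), t_k, (γ(t_{k+1}) − γ(t_k))/h) h + w(γ(0)) converges to L_w(γ) = ∫₀ᵗ L(γ(s),s,γ'(s)) ds + w(γ(0)) as K → ∞. -/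
open MeasureTheory intervalIntegral

/-- Mean value inequality comparing the increment with a fixed vector. -/
lemma mvt_sub {E : Type*} [NormedAddCommGroup E] [NormedSpace ℝ E]
    {γ : ℝ → E} {G : ℝ → E} {s : Set ℝ} (hs : Convex ℝ s)
    (hγ : ∀ z ∈ s, HasDerivWithinAt γ (G z) s z)
    {v : E} {C : ℝ} (hC : ∀ z ∈ s, ‖G z - v‖ ≤ C)
    {a b : ℝ} (ha : a ∈ s) (hb : b ∈ s) :
    ‖γ b - γ a - (b - a) • v‖ ≤ C * |b - a| := by
  have hd : ∀ z ∈ s, HasDerivWithinAt (fun z => γ z - z • v) (G z - v) s z := by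
    intro z hz
    have := (hγ z hz).sub (((hasDerivAt_id' z).smul_const v).hasDerivWithinAt)
    rw [one_smul] at this
    exact this
  have := Convex.norm_image_sub_le_of_norm_hasDerivWithin_le hd hC hs ha hb
  have he : (γ b - b • v) - (γ a - a • v) = γ b - γ a - (b - a) • v := by
    rw [sub_smul]; abel
  rw [he] at this
  simpa [Real.norm_eq_abs] using this

set_option maxHeartbeats 2000000 in
/-- Riemann-sum approximation of the action along a continuous piecewise-`C¹`
curve: with `h = t/K`, `t_k = h k` and sample points `y_k = γ(t_k)`, the
discrete action `∑_{k<K} L(γ(t_k), t_k, (γ(t_{k+1}) − γ(t_k))/h) h + w(γ 0)`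
converges to `∫₀ᵗ L(γ(s), s, γ'(s)) ds + w(γ 0)` as `K → ∞`. -/
theorem discrete_action_converges_to_action (d : ℕ) (t : ℝ) (ht : 0 < t)
    (L : EuclideanSpace ℝ (Fin d) → ℝ → EuclideanSpace ℝ (Fin d) → ℝ)
    (hLcont : Continuous fun q : EuclideanSpace ℝ (Fin d) × ℝ × EuclideanSpace ℝ (Fin d) =>
      L q.1 q.2.1 q.2.2)
    (w : EuclideanSpace ℝ (Fin d) → ℝ)
    (x : EuclideanSpace ℝ (Fin d))
    (γ : ℝ → EuclideanSpace ℝ (Fin d)) (hγ : IsPiecewiseC1 d t γ) (hγt : γ t = x) :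
    Filter.Tendsto
      (fun K : ℕ => (∑ k ∈ Finset.range K,
          L (γ ((t / K) * k)) ((t / K) * k)
            ((t / K)⁻¹ • (γ ((t / K) * (k + 1)) - γ ((t / K) * k))) * (t / K))
        + w (γ 0))
      Filter.atTop
      (nhds ((∫ s in (0 : ℝ)..t, L (γ s) s (deriv γ s)) + w (γ 0))) := by
  classical
  obtain ⟨hγc, m, τ, hm, hτ0, hτm, hτlt, hC1⟩ := hγ
  -- monotonicity of τ
  have hτmono : ∀ i j : ℕ, i ≤ j → j ≤ m → τ i ≤ τ j := by
    intro i j hij hjm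
    induction j with
    | zero => simp [Nat.le_zero.mp hij]
    | succ n ih =>
      rcases Nat.lt_or_ge i (n + 1) with hc | hc
      · exact (ih (Nat.lt_succ_iff.mp hc) (by omega)).trans (hτlt n (by omega)).le
      · have : i = n + 1 := le_antisymm hij hc
        simp [this]
  set P : ℕ → Set ℝ := fun l => Set.Icc (τ l) (τ (l + 1)) with hP
  set G : ℕ → ℝ → EuclideanSpace ℝ (Fin d) := fun l s => derivWithin γ (P l) s with hG
  have hHD : ∀ l < m, ∀ s ∈ P l, HasDerivWithinAt γ (G l s) (P l) s := by
    intro l hl s hs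
    exact ((hC1 l hl).differentiableOn one_ne_zero s hs).hasDerivWithinAt
  have hGc : ∀ l < m, ContinuousOn (G l) (P l) := by
    intro l hl
    exact (hC1 l hl).continuousOn_derivWithin (uniqueDiffOn_Icc (hτlt l hl)) le_rfl
  -- uniform derivative bound R
  have hRl : ∀ l : ℕ, ∃ R, l < m → ∀ s ∈ P l, ‖G l s‖ ≤ R := by
    intro l
    by_cases hl : l < m
    · obtain ⟨R, hR⟩ := isCompact_Icc.exists_bound_of_continuousOn (hGc l hl)
      exact ⟨R, fun _ => hR⟩
    · exact ⟨0, fun h => absurd h hl⟩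
  choose Rf hRf using hRl
  set R : ℝ := 1 + ∑ l ∈ Finset.range m, |Rf l| with hRdef
  have hR1 : (1 : ℝ) ≤ R := le_add_of_nonneg_right (Finset.sum_nonneg fun _ _ => abs_nonneg _)
  have hRpos : (0 : ℝ) < R := lt_of_lt_of_le one_pos hR1
  have hRG : ∀ l < m, ∀ s ∈ P l, ‖G l s‖ ≤ R := by
    intro l hl s hs
    calc ‖G l s‖ ≤ Rf l := hRf l hl s hs
      _ ≤ |Rf l| := le_abs_self _
      _ ≤ ∑ l ∈ Finset.range m, |Rf l| :=
          Finset.single_le_sum (f := fun l => |Rf l|) (fun _ _ => abs_nonneg _) (Finset.mem_range.2 hl)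
      _ ≤ R := le_add_of_nonneg_left zero_le_one
  -- Lipschitz on each piece
  have hLipP : ∀ l < m, ∀ a ∈ P l, ∀ b ∈ P l, ‖γ b - γ a‖ ≤ R * |b - a| := by
    intro l hl a ha b hb
    have := Convex.norm_image_sub_le_of_norm_hasDerivWithin_le
      (fun s hs => hHD l hl s hs) (fun s hs => hRG l hl s hs) (convex_Icc _ _) ha hb
    simpa [Real.norm_eq_abs] using this
  -- global Lipschitz
  have hLip : ∀ a ∈ Set.Icc (0:ℝ) t, ∀ b ∈ Set.Icc (0:ℝ) t, ‖γ b - γ a‖ ≤ R * |b - a| := by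
    have aux : ∀ n ≤ m, ∀ a b, τ 0 ≤ a → a ≤ b → b ≤ τ n → ‖γ b - γ a‖ ≤ R * (b - a) := by
      intro n
      induction n with
      | zero =>
        intro _ a b h1 h2 h3
        have : a = b := le_antisymm h2 (h3.trans h1)
        subst this
        simp
      | succ n ih =>
        intro hn a b h1 h2 h3
        by_cases hb : b ≤ τ n
        · exact ih (by omega) a b h1 h2 hb
        · by_cases ha : τ n ≤ a
          · have := hLipP n (by omega) a ⟨ha, h2.trans h3⟩ b ⟨ha.trans h2, h3⟩
            rwa [abs_of_nonneg (sub_nonneg.2 h2)] at this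
          · push_neg at ha hb
            have h₁ := ih (by omega) a (τ n) h1 ha.le le_rfl
            have h₂ := hLipP n (by omega) (τ n) ⟨le_rfl, (hτlt n (by omega)).le⟩ b ⟨hb.le, h3⟩
            rw [abs_of_nonneg (sub_nonneg.2 hb.le)] at h₂
            calc ‖γ b - γ a‖ ≤ ‖γ b - γ (τ n)‖ + ‖γ (τ n) - γ a‖ :=
                  norm_sub_le_norm_sub_add_norm_sub _ _ _
              _ ≤ R * (b - τ n) + R * (τ n - a) := add_le_add h₂ h₁
              _ = R * (b - a) := by ring
    intro a ha b hb
    rcases le_total a b with hab | hab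
    · have := aux m le_rfl a b (by rw [hτ0]; exact ha.1) hab (by rw [hτm]; exact hb.2)
      rwa [abs_of_nonneg (sub_nonneg.2 hab)]
    · have := aux m le_rfl b a (by rw [hτ0]; exact hb.1) hab (by rw [hτm]; exact ha.2)
      rw [abs_sub_comm, abs_of_nonneg (sub_nonneg.2 hab), ← norm_sub_rev]
      exact this
  -- covering
  have hcover : ∀ s ∈ Set.Icc (0:ℝ) t, ∃ l < m, s ∈ P l := by
    have aux : ∀ n, 0 < n → ∀ s, τ 0 ≤ s → s ≤ τ n → ∃ l < n, τ l ≤ s ∧ s ≤ τ (l + 1) := by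
      intro n
      induction n with
      | zero => intro h; exact absurd h (lt_irrefl 0)
      | succ n ih =>
        intro _ s h0 h1
        by_cases hs : s ≤ τ n
        · rcases Nat.eq_zero_or_pos n with rfl | hn
          · exact ⟨0, by omega, h0, h1⟩
          · obtain ⟨l, hl, hh⟩ := ih hn s h0 hs
            exact ⟨l, by omega, hh⟩
        · exact ⟨n, by omega, (not_le.mp hs).le, h1⟩
    intro s hs
    obtain ⟨l, hl, hh⟩ := aux m hm s (by rw [hτ0]; exact hs.1) (by rw [hτm]; exact hs.2)
    exact ⟨l, hl, hh⟩
  have hcover' : ∀ s ∈ Set.Ico (0:ℝ) t, ∃ l < m, τ l ≤ s ∧ s < τ (l + 1) := by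
    intro s hs
    obtain ⟨l, hl, hh⟩ := hcover s ⟨hs.1, hs.2.le⟩
    rcases lt_or_eq_of_le hh.2 with hlt | heq
    · exact ⟨l, hl, hh.1, hlt⟩
    · -- s = τ (l+1)
      rcases Nat.lt_or_ge (l + 1) m with hlm | hlm
      · exact ⟨l + 1, hlm, heq.ge, heq ▸ (heq ▸ hτlt (l + 1) hlm)⟩
      · exfalso
        have : τ (l + 1) ≤ τ m := hτmono (l + 1) m (by omega) le_rfl
        have hlm' : l + 1 = m := by omega
        have h2 := hs.2
        rw [heq, hlm', hτm] at h2
        exact lt_irrefl _ h2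
  -- breakpoints
  set T : Set ℝ := τ '' Set.Iic m with hT
  have hTfin : T.Finite := (Set.finite_Iic m).image τ
  have hTae : ∀ᵐ s : ℝ, s ∉ T := measure_eq_zero_iff_ae_notMem.mp (hTfin.measure_zero _)
  -- identification of the derivative off breakpoints
  have hioo : ∀ l < m, ∀ s, s ∉ T → s ∈ P l → s ∈ Set.Ioo (τ l) (τ (l + 1)) := by
    intro l hl s hsT hsl
    constructor
    · exact lt_of_le_of_ne hsl.1 (fun he => hsT ⟨l, Set.mem_Iic.2 (by omega), he⟩)
    · exact lt_of_le_of_ne hsl.2 (fun he => hsT ⟨l + 1, Set.mem_Iic.2 (by omega), he.symm⟩)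
  have hderiv : ∀ l < m, ∀ s ∈ Set.Ioo (τ l) (τ (l + 1)), deriv γ s = G l s := by
    intro l hl s hs
    exact (derivWithin_of_mem_nhds (Icc_mem_nhds hs.1 hs.2)).symm
  have hkey : ∀ s ∈ Set.Icc (0:ℝ) t, s ∉ T →
      ∃ l < m, s ∈ Set.Ioo (τ l) (τ (l + 1)) ∧ deriv γ s = G l s ∧ ‖deriv γ s‖ ≤ R := by
    intro s hs hsT
    obtain ⟨l, hl, hsl⟩ := hcover s hs
    have h12 := hioo l hl s hsT hsl
    have hder := hderiv l hl s h12
    exact ⟨l, hl, h12, hder, hder ▸ hRG l hl s hsl⟩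
  -- compact set and bounds for L
  set Kc : Set (EuclideanSpace ℝ (Fin d) × ℝ × EuclideanSpace ℝ (Fin d)) :=
    (γ '' Set.Icc 0 t) ×ˢ (Set.Icc (0:ℝ) t ×ˢ Metric.closedBall (0 : EuclideanSpace ℝ (Fin d)) R)
    with hKc
  have hKcomp : IsCompact Kc :=
    (isCompact_Icc.image hγc).prod (isCompact_Icc.prod (isCompact_closedBall _ _))
  obtain ⟨M₀, hM₀⟩ := hKcomp.exists_bound_of_continuousOn hLcont.continuousOn
  set M : ℝ := |M₀| with hM
  have hMnn : 0 ≤ M := abs_nonneg _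
  have hMb : ∀ p ∈ Kc, ‖L p.1 p.2.1 p.2.2‖ ≤ M := fun p hp => (hM₀ p hp).trans (le_abs_self _)
  have hmem : ∀ u : ℝ, ∀ v : EuclideanSpace ℝ (Fin d), u ∈ Set.Icc (0:ℝ) t → ‖v‖ ≤ R →
      (γ u, u, v) ∈ Kc := by
    intro u v hu hv
    exact ⟨Set.mem_image_of_mem _ hu, hu, by simpa [Metric.mem_closedBall, dist_zero_right] using hv⟩
  -- integrability of the action integrand
  have hgmeas : Measurable fun s => L (γ s) s (deriv γ s) :=
    hLcont.measurable.comp ((hγc.measurable).prodMk (measurable_id.prodMk (measurable_deriv γ)))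
  have hgint : IntervalIntegrable (fun s => L (γ s) s (deriv γ s)) volume 0 t := by
    rw [intervalIntegrable_iff]
    apply Integrable.mono' (integrableOn_const (C := M) measure_Ioc_lt_top.ne) hgmeas.aestronglyMeasurable.restrict
    filter_upwards [ae_restrict_mem measurableSet_uIoc, ae_restrict_of_ae hTae] with s hs hsT
    rw [min_eq_left ht.le, max_eq_right ht.le] at hs
    have hs' : s ∈ Set.Icc (0:ℝ) t := ⟨hs.1.le, hs.2⟩
    obtain ⟨l, hl, _, _, hRd⟩ := hkey s hs' hsT
    exact hMb _ (hmem s _ hs' hRd)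
  -- uniform continuity of L on Kc
  obtain ⟨hLu⟩ : Nonempty (UniformContinuousOn (fun q : EuclideanSpace ℝ (Fin d) × ℝ ×
      EuclideanSpace ℝ (Fin d) => L q.1 q.2.1 q.2.2) Kc) :=
    ⟨hKcomp.uniformContinuousOn_of_continuous hLcont.continuousOn⟩
  have hLuc := Metric.uniformContinuousOn_iff.mp hLu
  -- uniform continuity of the piecewise derivatives
  have hGu : ∀ ε > 0, ∃ δ > 0, ∀ l < m, ∀ p ∈ P l, ∀ q ∈ P l,
      dist p q < δ → dist (G l p) (G l q) < ε := by
    intro ε hε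
    have hex : ∀ l : ℕ, ∃ δ, 0 < δ ∧ (l < m → ∀ p ∈ P l, ∀ q ∈ P l,
        dist p q < δ → dist (G l p) (G l q) < ε) := by
      intro l
      by_cases hl : l < m
      · obtain ⟨δ, hδ, hδ'⟩ := Metric.uniformContinuousOn_iff.mp
          (isCompact_Icc.uniformContinuousOn_of_continuous (hGc l hl)) ε hε
        exact ⟨δ, hδ, fun _ => hδ'⟩
      · exact ⟨1, one_pos, fun h => absurd h hl⟩
    choose δf hδf hδf' using hex
    refine ⟨(Finset.range m).inf' ⟨0, Finset.mem_range.2 hm⟩ δf, ?_, ?_⟩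
    · exact (Finset.lt_inf'_iff _).2 fun l _ => hδf l
    · intro l hl p hp q hq hpq
      exact hδf' l hl p hp q hq
        (hpq.trans_le (Finset.inf'_le _ (Finset.mem_range.2 hl)))
  -- fold the integrand
  set g : ℝ → ℝ := fun s => L (γ s) s (deriv γ s) with hgdef
  -- main convergence of the Riemann sums
  have main : Filter.Tendsto (fun K : ℕ => ∑ k ∈ Finset.range K,
      L (γ ((t / K) * k)) ((t / K) * k)
        ((t / K)⁻¹ • (γ ((t / K) * (k + 1)) - γ ((t / K) * k))) * (t / K))
      Filter.atTop (nhds (∫ s in (0:ℝ)..t, g s)) := by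
    rw [Metric.tendsto_nhds]
    intro ε hε
    set ε₁ : ℝ := ε / (2 * (t + 1)) with hε₁def
    have hε₁ : 0 < ε₁ := by positivity
    obtain ⟨δL, hδL, hLP⟩ := hLuc ε₁ hε₁
    obtain ⟨δG, hδG, hGP⟩ := hGu (δL / 2) (by positivity)
    set c : ℝ := min (min (δL / (2 * R)) (δL / 2)) (min δG (ε / (2 * (2 * M + 1) * (m + 1))))
      with hcdef
    have hc : 0 < c := by positivity
    have hev1 : ∀ᶠ K : ℕ in Filter.atTop, t / K < c :=
      (tendsto_const_div_atTop_nhds_zero_nat t).eventually (eventually_lt_nhds hc)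
    filter_upwards [hev1, Filter.eventually_ge_atTop 1] with K hKc hK1
    have hKpos : (0:ℝ) < K := by exact_mod_cast hK1
    set h : ℝ := t / K with hhdef
    have hhpos : 0 < h := div_pos ht hKpos
    have hhc : h < c := hKc
    set u : ℕ → ℝ := fun k => h * k with hudef
    have hu0 : u 0 = 0 := by simp [hudef]
    have huK : u K = t := by
      simp only [hudef, hhdef]
      field_simp
    have hustep : ∀ k : ℕ, u (k + 1) - u k = h := by
      intro k; simp only [hudef]; push_cast; ring
    have humono : Monotone u := fun i j hij =>
      mul_le_mul_of_nonneg_left (Nat.cast_le.2 hij) hhpos.le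
    have humem : ∀ k ≤ K, u k ∈ Set.Icc (0:ℝ) t := by
      intro k hk
      refine ⟨mul_nonneg hhpos.le (Nat.cast_nonneg k), ?_⟩
      rw [← huK]; exact humono hk
    -- consequences of h < c
    have hc1 : R * h < δL := by
      have h1 : h < δL / (2 * R) := lt_of_lt_of_le hhc ((min_le_left _ _).trans (min_le_left _ _))
      have h2 : R * h < R * (δL / (2 * R)) := mul_lt_mul_of_pos_left h1 hRpos
      have h3 : R * (δL / (2 * R)) = δL / 2 := by field_simp
      rw [h3] at h2; exact h2.trans (half_lt_self hδL)
    have hc2 : h < δL := by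
      have := lt_of_lt_of_le hhc ((min_le_left _ _).trans (min_le_right _ _)); linarith
    have hc3 : h < δG := lt_of_lt_of_le hhc ((min_le_right _ _).trans (min_le_left _ _))
    have hc4 : (m + 1 : ℝ) * (2 * M) * h < ε / 2 := by
      have h1 : h < ε / (2 * (2 * M + 1) * (m + 1)) :=
        lt_of_lt_of_le hhc ((min_le_right _ _).trans (min_le_right _ _))
      have hD : (0:ℝ) < 2 * (2 * M + 1) * (m + 1) := by positivity
      have h2 : h * (2 * (2 * M + 1) * (m + 1)) < ε := (lt_div_iff₀ hD).mp h1
      nlinarith [mul_nonneg (mul_nonneg (by norm_num : (0:ℝ) ≤ 2) (Nat.cast_nonneg m)) hhpos.le,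
        mul_nonneg hhpos.le hMnn]
    -- integrability on subintervals and splitting
    have hint : ∀ k < K, IntervalIntegrable g volume (u k) (u (k + 1)) := by
      intro k hk
      apply hgint.mono_set
      rw [Set.uIcc_of_le (humono (Nat.le_succ k)), Set.uIcc_of_le ht.le]
      exact Set.Icc_subset_Icc (humem k (by omega)).1 (humem (k + 1) (by omega)).2
    have hsplit : (∫ s in (0:ℝ)..t, g s) = ∑ k ∈ Finset.range K, ∫ s in u k..u (k + 1), g s := by
      rw [intervalIntegral.sum_integral_adjacent_intervals hint, hu0, huK]
    set Good : ℕ → Prop := fun k => ∃ l < m, Set.Icc (u k) (u (k + 1)) ⊆ P l with hGooddef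
    -- per-interval estimate
    have hperk : ∀ k ∈ Finset.range K,
        |L (γ (u k)) (u k) (h⁻¹ • (γ (u (k + 1)) - γ (u k))) * h - ∫ s in u k..u (k + 1), g s|
          ≤ (if Good k then ε₁ else 2 * M) * h := by
      intro k hkr
      rw [Finset.mem_range] at hkr
      have hab : u k ≤ u (k + 1) := humono (Nat.le_succ k)
      have hba : u (k + 1) - u k = h := hustep k
      have ha : u k ∈ Set.Icc (0:ℝ) t := humem k hkr.le
      have hbq : u (k + 1) ∈ Set.Icc (0:ℝ) t := humem (k + 1) hkr
      set B : ℝ := if Good k then ε₁ else 2 * M with hBdef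
      have hB0 : 0 ≤ B := by
        rw [hBdef]
        by_cases hGk : Good k
        · rw [if_pos hGk]; exact hε₁.le
        · rw [if_neg hGk]; positivity
      have hvR : ‖h⁻¹ • (γ (u (k + 1)) - γ (u k))‖ ≤ R := by
        rw [norm_smul, norm_inv, Real.norm_eq_abs, abs_of_pos hhpos]
        have h1 := hLip (u k) ha (u (k + 1)) hbq
        rw [hba, abs_of_pos hhpos] at h1
        calc h⁻¹ * ‖γ (u (k + 1)) - γ (u k)‖ ≤ h⁻¹ * (R * h) :=
              mul_le_mul_of_nonneg_left h1 (inv_nonneg.2 hhpos.le)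
          _ = R := by field_simp
      have hp : (γ (u k), u k, h⁻¹ • (γ (u (k + 1)) - γ (u k))) ∈ Kc := hmem _ _ ha hvR
      have hconst : L (γ (u k)) (u k) (h⁻¹ • (γ (u (k + 1)) - γ (u k))) * h
          = ∫ _ in u k..u (k + 1), L (γ (u k)) (u k) (h⁻¹ • (γ (u (k + 1)) - γ (u k))) := by
        rw [intervalIntegral.integral_const, hba, smul_eq_mul, mul_comm]
      rw [hconst, ← intervalIntegral.integral_sub intervalIntegrable_const (hint k hkr)]
      have hbound : ∀ᵐ s ∂(volume.restrict (Set.uIoc (u k) (u (k + 1)))),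
          ‖L (γ (u k)) (u k) (h⁻¹ • (γ (u (k + 1)) - γ (u k))) - g s‖ ≤ B := by
        filter_upwards [ae_restrict_mem measurableSet_uIoc, ae_restrict_of_ae hTae] with s hs hsT
        rw [Set.uIoc_of_le hab] at hs
        have hsIcc : s ∈ Set.Icc (0:ℝ) t := ⟨ha.1.trans hs.1.le, hs.2.trans hbq.2⟩
        obtain ⟨l, hl, hsIoo, hder, hdR⟩ := hkey s hsIcc hsT
        have hq : (γ s, s, deriv γ s) ∈ Kc := hmem s _ hsIcc hdR
        rw [hBdef]
        by_cases hGk : Good k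
        · rw [if_pos hGk]
          obtain ⟨l', hl', hsub⟩ := hGk
          have hsl' : s ∈ P l' := hsub ⟨hs.1.le, hs.2⟩
          have hsIoo' := hioo l' hl' s hsT hsl'
          have hder' : deriv γ s = G l' s := hderiv l' hl' s hsIoo'
          -- velocity estimate
          have hvel : ‖h⁻¹ • (γ (u (k + 1)) - γ (u k)) - G l' s‖ ≤ δL / 2 := by
            have key : ‖γ (u (k + 1)) - γ (u k) - (u (k + 1) - u k) • G l' s‖
                ≤ (δL / 2) * |u (k + 1) - u k| := by
              apply mvt_sub (convex_Icc (u k) (u (k + 1)))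
                (fun z hz => (hHD l' hl' z (hsub hz)).mono hsub)
                (fun z hz => ?_) (Set.left_mem_Icc.2 hab) (Set.right_mem_Icc.2 hab)
              have hzP : z ∈ P l' := hsub hz
              have hd : dist z s < δG := by
                rw [Real.dist_eq]
                have h1 : |z - s| ≤ h := by
                  rw [abs_le]
                  constructor
                  · linarith [hz.1, hs.2, hba]
                  · linarith [hz.2, hs.1, hba]
                linarith [hc3]
              have h2 := hGP l' hl' z hzP s hsl' hd
              rw [dist_eq_norm] at h2
              exact h2.le
            rw [hba, abs_of_pos hhpos] at key
            have hrw : h⁻¹ • (γ (u (k + 1)) - γ (u k)) - G l' s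
                = h⁻¹ • (γ (u (k + 1)) - γ (u k) - h • G l' s) := by
              simp [smul_sub, smul_smul, inv_mul_cancel₀ hhpos.ne']
            rw [hrw, norm_smul, norm_inv, Real.norm_eq_abs, abs_of_pos hhpos]
            calc h⁻¹ * ‖γ (u (k + 1)) - γ (u k) - h • G l' s‖ ≤ h⁻¹ * (δL / 2 * h) :=
                  mul_le_mul_of_nonneg_left key (inv_nonneg.2 hhpos.le)
              _ = δL / 2 := by field_simp
          have hdist : dist ((γ (u k), u k, h⁻¹ • (γ (u (k + 1)) - γ (u k))) :
                EuclideanSpace ℝ (Fin d) × ℝ × EuclideanSpace ℝ (Fin d))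
              (γ s, s, deriv γ s) < δL := by
            rw [Prod.dist_eq, Prod.dist_eq]
            apply max_lt
            · rw [dist_eq_norm, norm_sub_rev]
              have h1 := hLip (u k) ha s hsIcc
              have h2 : |s - u k| ≤ h := by
                rw [abs_of_nonneg (by linarith [hs.1])]
                linarith [hs.2, hba]
              calc ‖γ s - γ (u k)‖ ≤ R * |s - u k| := h1
                _ ≤ R * h := mul_le_mul_of_nonneg_left h2 hRpos.le
                _ < δL := hc1
            · apply max_lt
              · rw [Real.dist_eq, abs_sub_comm]
                have h2 : |s - u k| ≤ h := by
                  rw [abs_of_nonneg (by linarith [hs.1])]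
                  linarith [hs.2, hba]
                linarith [hc2]
              · rw [dist_eq_norm, hder']
                exact lt_of_le_of_lt hvel (by linarith)
          have hfin := hLP _ hp _ hq hdist
          rw [Real.dist_eq] at hfin
          simp only [hgdef]
          rw [Real.norm_eq_abs]
          exact hfin.le
        · rw [if_neg hGk]
          calc ‖L (γ (u k)) (u k) (h⁻¹ • (γ (u (k + 1)) - γ (u k))) - g s‖
              ≤ ‖L (γ (u k)) (u k) (h⁻¹ • (γ (u (k + 1)) - γ (u k)))‖ + ‖g s‖ := norm_sub_le _ _
            _ ≤ M + M := add_le_add (hMb _ hp) (hMb _ hq)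
            _ = 2 * M := by ring
      have hest := intervalIntegral.norm_integral_le_of_norm_le (g := fun _ => B) hab
        (by rw [Set.uIoc_of_le hab] at hbound; exact (ae_restrict_iff' measurableSet_Ioc).mp hbound)
        intervalIntegrable_const
      rw [intervalIntegral.integral_const, hba, smul_eq_mul,
        Real.norm_eq_abs] at hest
      rw [mul_comm] at hest
      exact hest
    -- count of bad intervals
    have hbadcard : ((Finset.range K).filter fun k => ¬ Good k).card ≤ m + 1 := by
      have hexl : ∀ k : ℕ, ∃ l, k ∈ (Finset.range K).filter (fun k => ¬ Good k) →
          l ≤ m ∧ τ l ∈ Set.Ioo (u k) (u (k + 1)) := by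
        intro k
        by_cases hk : k ∈ (Finset.range K).filter (fun k => ¬ Good k)
        swap
        · exact ⟨0, fun hc => absurd hc hk⟩
        rw [Finset.mem_filter, Finset.mem_range] at hk
        obtain ⟨hkK, hnG⟩ := hk
        have hukIco : u k ∈ Set.Ico (0:ℝ) t := by
          refine ⟨(humem k hkK.le).1, ?_⟩
          have hlt : u k < u K := mul_lt_mul_of_pos_left (by exact_mod_cast hkK) hhpos
          rwa [huK] at hlt
        obtain ⟨l, hl, hl1, hl2⟩ := hcover' (u k) hukIco
        refine ⟨l + 1, fun _ => ⟨by omega, hl2, ?_⟩⟩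
        by_contra hle
        push_neg at hle
        exact hnG ⟨l, hl, Set.Icc_subset_Icc hl1 hle⟩
      choose f hf using hexl
      have hf1 : ∀ k ∈ (Finset.range K).filter (fun k => ¬ Good k), f k ≤ m :=
        fun k hk => (hf k hk).1
      have hf2 : ∀ k ∈ (Finset.range K).filter (fun k => ¬ Good k),
          τ (f k) ∈ Set.Ioo (u k) (u (k + 1)) := fun k hk => (hf k hk).2
      have hinj : Set.InjOn f ((((Finset.range K).filter fun k => ¬ Good k) : Finset ℕ) : Set ℕ) := by
        intro k hk' k' hk'' he
        have hk := Finset.mem_coe.mp hk'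
        have hk' := Finset.mem_coe.mp hk''
        by_contra hne
        rcases Nat.lt_or_ge k k' with hlt | hge
        · have h1 : u (k + 1) ≤ u k' := humono (by omega)
          have h2 := (hf2 k hk).2
          have h3 := (hf2 k' hk').1
          rw [he] at h2
          linarith
        · have hlt : k' < k := by omega
          have h1 : u (k' + 1) ≤ u k := humono (by omega)
          have h2 := (hf2 k' hk').2
          have h3 := (hf2 k hk).1
          rw [he] at h3
          linarith
      have := Finset.card_le_card_of_injOn f
        (fun k hk => Finset.mem_range.2 (Nat.lt_succ_of_le (hf1 k hk))) hinj
      simpa using this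
    -- assemble
    have hcast2 : ∀ k : ℕ, h * (k:ℝ) = u k := fun k => rfl
    have hcast : ∀ k : ℕ, h * ((k:ℝ) + 1) = u (k + 1) := by
      intro k; simp only [hudef]; push_cast; ring
    simp only [hcast, hcast2]
    rw [Real.dist_eq, hsplit, ← Finset.sum_sub_distrib]
    have hchain :
        |∑ k ∈ Finset.range K,
            (L (γ (u k)) (u k) (h⁻¹ • (γ (u (k + 1)) - γ (u k))) * h -
              ∫ s in u k..u (k + 1), g s)| < ε := by
      calc |∑ k ∈ Finset.range K,
            (L (γ (u k)) (u k) (h⁻¹ • (γ (u (k + 1)) - γ (u k))) * h -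
              ∫ s in u k..u (k + 1), g s)|
          ≤ ∑ k ∈ Finset.range K,
            |L (γ (u k)) (u k) (h⁻¹ • (γ (u (k + 1)) - γ (u k))) * h -
              ∫ s in u k..u (k + 1), g s| := Finset.abs_sum_le_sum_abs _ _
        _ ≤ ∑ k ∈ Finset.range K, (if Good k then ε₁ else 2 * M) * h :=
            Finset.sum_le_sum hperk
        _ ≤ ∑ k ∈ Finset.range K, (ε₁ * h + if Good k then 0 else 2 * M * h) := by
            apply Finset.sum_le_sum
            intro k _
            by_cases hGk : Good k
            · simp only [if_pos hGk]
              have : (0:ℝ) ≤ 2 * M * h → True := fun _ => trivial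
              nlinarith [hhpos.le, hε₁.le]
            · simp only [if_neg hGk]
              nlinarith [hhpos.le, hε₁.le]
        _ = K * (ε₁ * h) + ∑ k ∈ Finset.range K, (if Good k then 0 else 2 * M * h) := by
            rw [Finset.sum_add_distrib, Finset.sum_const, Finset.card_range, nsmul_eq_mul]
        _ ≤ K * (ε₁ * h) + (m + 1) * (2 * M * h) := by
            have : ∑ k ∈ Finset.range K, (if Good k then (0:ℝ) else 2 * M * h)
                = ((Finset.range K).filter fun k => ¬ Good k).card * (2 * M * h) := by
              rw [Finset.sum_ite, Finset.sum_const, Finset.sum_const]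
              simp
            rw [this]
            have h1 : (((Finset.range K).filter fun k => ¬ Good k).card : ℝ) ≤ (m:ℝ) + 1 := by
              exact_mod_cast hbadcard
            have h2 : (0:ℝ) ≤ 2 * M * h := by positivity
            nlinarith
        _ < ε := by
            have hKh : (K:ℝ) * h = t := by
              rw [hhdef]; field_simp
            have he1 : (K:ℝ) * (ε₁ * h) = ε₁ * t := by
              rw [← hKh]; ring
            have he2 : ε₁ * t < ε / 2 := by
              rw [hε₁def]
              rw [div_mul_eq_mul_div, div_lt_div_iff₀ (by positivity) (by norm_num : (0:ℝ) < 2)]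
              nlinarith
            have he3 : ((m:ℝ) + 1) * (2 * M * h) < ε / 2 := by nlinarith [hc4]
            linarith [he1 ▸ (by linarith : (K:ℝ) * (ε₁ * h) + ((m:ℝ)+1) * (2*M*h) < ε)]
    exact hchain
  exact main.add_const _
end
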